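/- arXiv:2308.09382 — 4 statements merged into one kernel-verified Lean document; each statement's English description precedes it below -/
import Mathlib

section
/- For every positive integer t, the Lagrangian of K_{3(t+1)}^{3-} is an irrational number. -/
open Finset

/-- The Lagrangian polynomial of a hypergraph `H` on vertex set `V`. -/
def lagPoly {V : Type*} [DecidableEq V] (H : Finset (Finset V)) (x : V → ℝ) : ℝ :=
  ∑ E ∈ H, ∏ i ∈ E, x i

/-- The set of values of the Lagrangian polynomial over the standard simplex;
the Lagrangian of `H` is the greatest element of this set. -/
def lagValues {V : Type*} [Fintype V] [DecidableEq V] (H : Finset (Finset V)) : Set ℝ :=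
  lagPoly H '' stdSimplex ℝ V

/-- `K_{3(t+1)}^{3-}`: the complete 3-graph on `3t+3` vertices minus the single edge
consisting of the last three vertices. -/
def Kminus (t : ℕ) : Finset (Finset (Fin (3 * t + 3))) :=
  (Finset.univ.powersetCard 3).erase (Finset.univ.filter (fun i => 3 * t ≤ i.val))


lemma swap_sum {V : Type*} [DecidableEq V] (H : Finset (Finset V)) (i j : V)
    (hsym : ∀ E ∈ H, E.image (Equiv.swap i j) ∈ H) (x : V → ℝ) :
    ∑ E ∈ H.filter (fun E => i ∈ E ∧ j ∉ E), ∏ k ∈ E.erase i, x k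
      = ∑ E ∈ H.filter (fun E => j ∈ E ∧ i ∉ E), ∏ k ∈ E.erase j, x k := by
  have himg : ∀ E : Finset V, (E.image (Equiv.swap i j)).image (Equiv.swap i j) = E := by
    intro E
    rw [Finset.image_image]
    rw [show (Equiv.swap i j : V → V) ∘ (Equiv.swap i j : V → V) = id from funext fun k => Equiv.swap_apply_self i j k]
    exact Finset.image_id
  have hmapmem : ∀ E ∈ H.filter (fun E => i ∈ E ∧ j ∉ E),
      E.image (Equiv.swap i j) ∈ H.filter (fun E => j ∈ E ∧ i ∉ E) := by
    intro E hE
    rcases Finset.mem_filter.1 hE with ⟨hEH, hiE, hjE⟩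
    refine Finset.mem_filter.2 ⟨hsym E hEH, ?_, ?_⟩
    · exact Finset.mem_image.2 ⟨i, hiE, Equiv.swap_apply_left i j⟩
    · intro hcon
      rcases Finset.mem_image.1 hcon with ⟨k, hkE, hk⟩
      have : k = j := by
        have := congrArg (Equiv.swap i j) hk
        rwa [Equiv.swap_apply_self, Equiv.swap_apply_left] at this
      exact hjE (this ▸ hkE)
  have hmapmem' : ∀ E ∈ H.filter (fun E => j ∈ E ∧ i ∉ E),
      E.image (Equiv.swap i j) ∈ H.filter (fun E => i ∈ E ∧ j ∉ E) := by
    intro E hE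
    rcases Finset.mem_filter.1 hE with ⟨hEH, hjE, hiE⟩
    refine Finset.mem_filter.2 ⟨hsym E hEH, ?_, ?_⟩
    · exact Finset.mem_image.2 ⟨j, hjE, Equiv.swap_apply_right i j⟩
    · intro hcon
      rcases Finset.mem_image.1 hcon with ⟨k, hkE, hk⟩
      have : k = i := by
        have := congrArg (Equiv.swap i j) hk
        rwa [Equiv.swap_apply_self, Equiv.swap_apply_right] at this
      exact hiE (this ▸ hkE)
  refine Finset.sum_bij' (fun E _ => E.image (Equiv.swap i j)) (fun E _ => E.image (Equiv.swap i j))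
    hmapmem hmapmem' (fun E _ => himg E) (fun E _ => himg E) ?_
  intro E hE
  rcases Finset.mem_filter.1 hE with ⟨_, hiE, hjE⟩
  have hfix : ∀ k ∈ E.erase i, Equiv.swap i j k = k := by
    intro k hk
    exact Equiv.swap_apply_of_ne_of_ne (Finset.mem_erase.1 hk).1
      (fun h => hjE (h ▸ (Finset.mem_erase.1 hk).2))
  have herase : (E.image (Equiv.swap i j)).erase j = (E.erase i).image (Equiv.swap i j) := by
    rw [Finset.image_erase (Equiv.injective _) E i, Equiv.swap_apply_left]
  rw [herase, Finset.prod_image]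
  · exact (Finset.prod_congr rfl fun k hk => by rw [hfix k hk]).symm
  · intro a _ b _ hab
    exact (Equiv.injective _) hab

lemma lagPoly_avg {V : Type*} [DecidableEq V] (H : Finset (Finset V)) (i j : V) (hij : i ≠ j)
    (hsym : ∀ E ∈ H, E.image (Equiv.swap i j) ∈ H) (x : V → ℝ) :
    lagPoly H (Function.update (Function.update x i ((x i + x j)/2)) j ((x i + x j)/2))
      = lagPoly H x +
        (∑ E ∈ H.filter (fun E => i ∈ E ∧ j ∈ E), ∏ k ∈ (E.erase i).erase j, x k) *
          (((x i + x j)/2)^2 - x i * x j) := by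
  set m := (x i + x j)/2 with hm
  set y := Function.update (Function.update x i m) j m with hy
  have hyi : y i = m := by
    rw [hy, Function.update_of_ne hij, Function.update_self]
  have hyj : y j = m := by rw [hy, Function.update_self]
  have hyk : ∀ k, k ≠ i → k ≠ j → y k = x k := by
    intro k hki hkj
    rw [hy, Function.update_of_ne hkj, Function.update_of_ne hki]
  have key : ∀ E : Finset V,
      (∏ k ∈ E, y k) - (∏ k ∈ E, x k) =
      (if i ∈ E ∧ j ∈ E then (m^2 - x i * x j) * ∏ k ∈ (E.erase i).erase j, x k
       else if i ∈ E then (m - x i) * ∏ k ∈ E.erase i, x k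
       else if j ∈ E then (m - x j) * ∏ k ∈ E.erase j, x k
       else 0) := by
    intro E
    by_cases hiE : i ∈ E <;> by_cases hjE : j ∈ E
    · have hjE' : j ∈ E.erase i := Finset.mem_erase.2 ⟨hij.symm, hjE⟩
      have hinner : ∏ k ∈ (E.erase i).erase j, y k = ∏ k ∈ (E.erase i).erase j, x k := by
        apply Finset.prod_congr rfl
        intro k hk
        have hk1 := Finset.mem_erase.1 hk
        have hk2 := Finset.mem_erase.1 hk1.2
        exact hyk k hk2.1 hk1.1
      rw [if_pos ⟨hiE, hjE⟩, ← Finset.mul_prod_erase E y hiE, ← Finset.mul_prod_erase (E.erase i) y hjE',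
        ← Finset.mul_prod_erase E x hiE, ← Finset.mul_prod_erase (E.erase i) x hjE', hinner, hyi, hyj]
      ring
    · have hinner : ∏ k ∈ E.erase i, y k = ∏ k ∈ E.erase i, x k := by
        apply Finset.prod_congr rfl
        intro k hk
        exact hyk k (Finset.mem_erase.1 hk).1 (fun h => hjE (h ▸ (Finset.mem_erase.1 hk).2))
      rw [if_neg (by tauto), if_pos hiE, ← Finset.mul_prod_erase E y hiE,
        ← Finset.mul_prod_erase E x hiE, hinner, hyi]
      ring
    · have hinner : ∏ k ∈ E.erase j, y k = ∏ k ∈ E.erase j, x k := by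
        apply Finset.prod_congr rfl
        intro k hk
        exact hyk k (fun h => hiE (h ▸ (Finset.mem_erase.1 hk).2)) (Finset.mem_erase.1 hk).1
      rw [if_neg (by tauto), if_neg hiE, if_pos hjE, ← Finset.mul_prod_erase E y hjE,
        ← Finset.mul_prod_erase E x hjE, hinner, hyj]
      ring
    · rw [if_neg (by tauto), if_neg hiE, if_neg hjE, sub_eq_zero]
      apply Finset.prod_congr rfl
      intro k hk
      exact hyk k (fun h => hiE (h ▸ hk)) (fun h => hjE (h ▸ hk))
  have hdiff : lagPoly H y - lagPoly H x
      = ∑ E ∈ H, ((∏ k ∈ E, y k) - (∏ k ∈ E, x k)) := by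
    rw [lagPoly, lagPoly, Finset.sum_sub_distrib]
  have hstep : lagPoly H y = lagPoly H x + ∑ E ∈ H, ((∏ k ∈ E, y k) - (∏ k ∈ E, x k)) := by
    rw [← hdiff]; ring
  rw [hstep]
  congr 1
  rw [Finset.sum_congr rfl (fun E _ => key E), Finset.sum_ite, Finset.sum_ite,
    Finset.sum_ite, Finset.sum_const_zero, add_zero]
  have hf1 : (H.filter (fun E => ¬(i ∈ E ∧ j ∈ E))).filter (fun E => i ∈ E)
      = H.filter (fun E => i ∈ E ∧ j ∉ E) := by
    rw [Finset.filter_filter]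
    exact Finset.filter_congr (fun E _ => by tauto)
  have hf2 : ((H.filter (fun E => ¬(i ∈ E ∧ j ∈ E))).filter (fun E => ¬ i ∈ E)).filter (fun E => j ∈ E)
      = H.filter (fun E => j ∈ E ∧ i ∉ E) := by
    rw [Finset.filter_filter, Finset.filter_filter]
    exact Finset.filter_congr (fun E _ => by tauto)
  rw [hf1, hf2, ← Finset.mul_sum, ← Finset.mul_sum, ← Finset.mul_sum,
    ← swap_sum H i j hsym x]
  have : m - x j = -(m - x i) := by rw [hm]; ring
  rw [this]
  ring


def esum {V : Type*} [DecidableEq V] (x : V → ℝ) (k : ℕ) (s : Finset V) : ℝ :=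
  ∑ E ∈ s.powersetCard k, ∏ i ∈ E, x i

lemma esum_zero {V : Type*} [DecidableEq V] (x : V → ℝ) (s : Finset V) : esum x 0 s = 1 := by
  simp [esum]

lemma esum_insert {V : Type*} [DecidableEq V] (x : V → ℝ) (k : ℕ) {s : Finset V} {a : V}
    (ha : a ∉ s) : esum x (k+1) (insert a s) = esum x (k+1) s + x a * esum x k s := by
  rw [esum, Finset.powersetCard_succ_insert ha, Finset.sum_union]
  · congr 1
    rw [Finset.sum_image (fun E hE E' hE' h => by
      have hE1 : a ∉ E := fun hc => ha ((Finset.mem_powersetCard.1 hE).1 hc)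
      have hE2 : a ∉ E' := fun hc => ha ((Finset.mem_powersetCard.1 hE').1 hc)
      rw [← Finset.erase_insert hE1, ← Finset.erase_insert hE2, h])]
    rw [esum, Finset.mul_sum]
    apply Finset.sum_congr rfl
    intro E hE
    rw [Finset.prod_insert (fun hc => ha ((Finset.mem_powersetCard.1 hE).1 hc))]
  · rw [Finset.disjoint_left]
    intro E hE hE'
    rcases Finset.mem_image.1 hE' with ⟨F, hF, rfl⟩
    exact ha ((Finset.mem_powersetCard.1 hE).1 (Finset.mem_insert_self a F))

lemma esum_uniform {V : Type*} [DecidableEq V] (x : V → ℝ) (a : ℝ) :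
    ∀ (s : Finset V), (∀ i ∈ s, x i = a) → ∀ k, esum x k s = (s.card.choose k : ℝ) * a ^ k := by
  intro s
  induction s using Finset.induction_on with
  | empty =>
    intro _ k
    cases k with
    | zero => simp [esum_zero]
    | succ k => rw [esum, Finset.powersetCard_eq_empty.2 (by simp)]; simp
  | insert v s hnotmem ih =>
    intro hunif k
    have hvs : ∀ i ∈ s, x i = a := fun i hi => hunif i (Finset.mem_insert_of_mem hi)
    cases k with
    | zero => simp [esum_zero]
    | succ k =>
      rw [esum_insert x k hnotmem, ih hvs (k+1), ih hvs k, hunif v (Finset.mem_insert_self v s),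
        Finset.card_insert_of_notMem hnotmem]
      rw [Nat.choose_succ_succ]
      push_cast
      ring

lemma esum_one {V : Type*} [DecidableEq V] (x : V → ℝ) (s : Finset V) :
    esum x 1 s = ∑ i ∈ s, x i := by
  rw [esum, Finset.powersetCard_one, Finset.sum_map]
  simp

lemma esum_insert1 {V : Type*} [DecidableEq V] (x : V → ℝ) {s : Finset V} {a : V}
    (ha : a ∉ s) : esum x 1 (insert a s) = esum x 1 s + x a := by
  have h := esum_insert x 0 ha
  norm_num [esum_zero] at h
  exact h

lemma esum_insert2 {V : Type*} [DecidableEq V] (x : V → ℝ) {s : Finset V} {a : V}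
    (ha : a ∉ s) : esum x 2 (insert a s) = esum x 2 s + x a * esum x 1 s := by
  have h := esum_insert x 1 ha
  norm_num at h
  exact h

lemma esum_insert3 {V : Type*} [DecidableEq V] (x : V → ℝ) {s : Finset V} {a : V}
    (ha : a ∉ s) : esum x 3 (insert a s) = esum x 3 s + x a * esum x 2 s := by
  have h := esum_insert x 2 ha
  norm_num at h
  exact h

section eval
variable (t : ℕ)

def NSpart : Finset (Fin (3*t+3)) := Finset.univ.filter (fun i => i.val < 3*t)
def Rpart : Finset (Fin (3*t+3)) := Finset.univ.filter (fun i => 3*t ≤ i.val)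

def u0 : Fin (3*t+3) := ⟨3*t, by omega⟩
def u1 : Fin (3*t+3) := ⟨3*t+1, by omega⟩
def u2 : Fin (3*t+3) := ⟨3*t+2, by omega⟩

lemma Rpart_eq : Rpart t = {u0 t, u1 t, u2 t} := by
  ext i
  simp [Rpart, u0, u1, u2, Fin.ext_iff]
  omega

lemma card_Rpart : (Rpart t).card = 3 := by
  rw [Rpart_eq]
  rw [Finset.card_insert_of_notMem (by simp [u0, u1, u2, Fin.ext_iff]),
    Finset.card_insert_of_notMem (by simp [u1, u2, Fin.ext_iff]), Finset.card_singleton]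

lemma card_NSpart : (NSpart t).card = 3*t := by
  have h := Finset.card_filter_add_card_filter_not
    (s := (Finset.univ : Finset (Fin (3*t+3)))) (p := fun i => i.val < 3*t)
  have h2 : (Finset.univ.filter (fun i : Fin (3*t+3) => ¬ i.val < 3*t)).card = 3 := by
    rw [show (Finset.univ.filter (fun i : Fin (3*t+3) => ¬ i.val < 3*t)) = Rpart t from by
      ext i; simp only [Rpart, Finset.mem_filter, Finset.mem_univ, true_and]; omega]
    exact card_Rpart t
  rw [Finset.card_univ, Fintype.card_fin, h2] at h
  unfold NSpart
  omega

lemma univ_decomp : (Finset.univ : Finset (Fin (3*t+3)))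
    = insert (u2 t) (insert (u1 t) (insert (u0 t) (NSpart t))) := by
  ext i
  simp [NSpart, u0, u1, u2, Fin.ext_iff]
  omega

lemma lagPoly_eval (a b : ℝ) :
    lagPoly (Kminus t) (fun i => if i.val < 3*t then a else b)
      = ((3*t).choose 3 : ℝ) * a^3 + 3*((3*t).choose 2 : ℝ)*a^2*b + 3*(3*t)*a*b^2 := by
  set x : Fin (3*t+3) → ℝ := fun i => if i.val < 3*t then a else b with hx
  have hxu0 : x (u0 t) = b := by simp [hx, u0]
  have hxu1 : x (u1 t) = b := by simp [hx, u1]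
  have hxu2 : x (u2 t) = b := by simp [hx, u2]
  have hNSunif : ∀ i ∈ NSpart t, x i = a := by
    intro i hi
    simp only [NSpart, Finset.mem_filter] at hi
    simp [hx, hi.2]
  have h0NS : u0 t ∉ NSpart t := by simp [NSpart, u0]
  have h1NS : u1 t ∉ insert (u0 t) (NSpart t) := by
    simp [NSpart, u0, u1, Fin.ext_iff]
  have h2NS : u2 t ∉ insert (u1 t) (insert (u0 t) (NSpart t)) := by
    simp [NSpart, u0, u1, u2, Fin.ext_iff]
  -- esum values on NSpart
  have e1 : esum x 1 (NSpart t) = (3*t : ℝ) * a := by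
    rw [esum_uniform x a _ hNSunif 1, card_NSpart]; push_cast [Nat.choose_one_right]; ring
  have e2 : esum x 2 (NSpart t) = ((3*t).choose 2 : ℝ) * a^2 := by
    rw [esum_uniform x a _ hNSunif 2, card_NSpart]
  have e3 : esum x 3 (NSpart t) = ((3*t).choose 3 : ℝ) * a^3 := by
    rw [esum_uniform x a _ hNSunif 3, card_NSpart]
  have e0 : esum x 0 (NSpart t) = 1 := esum_zero x _
  -- insert u0
  have g1 : esum x 1 (insert (u0 t) (NSpart t)) = (3*t:ℝ)*a + b := by
    rw [esum_insert1 x h0NS, e1, hxu0]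
  have g2 : esum x 2 (insert (u0 t) (NSpart t)) = ((3*t).choose 2 : ℝ)*a^2 + b*((3*t:ℝ)*a) := by
    rw [esum_insert2 x h0NS, e1, e2, hxu0]
  have g3 : esum x 3 (insert (u0 t) (NSpart t))
      = ((3*t).choose 3 : ℝ)*a^3 + b*(((3*t).choose 2 : ℝ)*a^2) := by
    rw [esum_insert3 x h0NS, e2, e3, hxu0]
  -- insert u1
  have i2 : esum x 2 (insert (u1 t) (insert (u0 t) (NSpart t)))
      = ((3*t).choose 2 : ℝ)*a^2 + 2*b*((3*t:ℝ)*a) + b^2 := by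
    rw [esum_insert2 x h1NS, g1, g2, hxu1]; ring
  have i3 : esum x 3 (insert (u1 t) (insert (u0 t) (NSpart t)))
      = ((3*t).choose 3 : ℝ)*a^3 + 2*b*(((3*t).choose 2 : ℝ)*a^2) + b^2*((3*t:ℝ)*a) := by
    rw [esum_insert3 x h1NS, g2, g3, hxu1]; ring
  -- insert u2
  have j3 : esum x 3 (Finset.univ : Finset (Fin (3*t+3)))
      = ((3*t).choose 3 : ℝ)*a^3 + 3*b*(((3*t).choose 2 : ℝ)*a^2) + 3*b^2*((3*t:ℝ)*a) + b^3 := by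
    rw [univ_decomp, esum_insert3 x h2NS, i2, i3, hxu2]; ring
  -- lagPoly = esum 3 univ - prod over Rpart
  have hRmem : Rpart t ∈ (Finset.univ : Finset (Fin (3*t+3))).powersetCard 3 :=
    Finset.mem_powersetCard.2 ⟨Finset.subset_univ _, card_Rpart t⟩
  have hprodR : ∏ i ∈ Rpart t, x i = b^3 := by
    rw [Finset.prod_congr rfl (fun i hi => show x i = b from by
      simp only [Rpart, Finset.mem_filter] at hi
      simp [hx]; omega), Finset.prod_const, card_Rpart]
  have : lagPoly (Kminus t) x = esum x 3 Finset.univ - ∏ i ∈ Rpart t, x i := by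
    rw [lagPoly, esum, show Kminus t = (Finset.univ.powersetCard 3).erase (Rpart t) from rfl,
      Finset.sum_erase_eq_sub hRmem]
  rw [this, j3, hprodR]
  ring

lemma sum_eval (a b : ℝ) :
    ∑ i, (fun i : Fin (3*t+3) => if i.val < 3*t then a else b) i = (3*t:ℝ)*a + 3*b := by
  rw [← esum_one]
  rw [univ_decomp]
  rw [esum_insert1 _ (by simp [NSpart, u0, u1, u2, Fin.ext_iff]),
      esum_insert1 _ (by simp [NSpart, u0, u1, Fin.ext_iff]),
      esum_insert1 _ (by simp [NSpart, u0])]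
  have := esum_uniform (fun i : Fin (3*t+3) => if i.val < 3*t then a else b) a (NSpart t)
    (by intro i hi; simp only [NSpart, Finset.mem_filter] at hi; simp [hi.2]) 1
  rw [this, card_NSpart]
  simp [u0, u1, u2, Nat.choose_one_right]
  ring
end eval


noncomputable def sN (u : ℕ) : ℝ := Real.sqrt ((9*u^2+36*u+24 : ℕ) : ℝ)

def q1v (u : ℕ) : ℚ := (3*(u:ℚ)+3)*(3*(u:ℚ)+6)*(9 - 6*(3*(u:ℚ)+3) - (3*(u:ℚ)+3)^2)/324
def q2v (u : ℕ) : ℚ := (3*(u:ℚ)+3)*(9*(u:ℚ)^2+36*(u:ℚ)+24)/324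

noncomputable def LagVal (u : ℕ) : ℝ := ((q1v u : ℚ) : ℝ) + ((q2v u : ℚ) : ℝ) * sN u

noncomputable def csd (u : ℕ) : ℝ := (3*(u:ℝ)+3)*((3*(u:ℝ)+6) - sN u)/6
noncomputable def rsd (u : ℕ) : ℝ := (3*(u:ℝ)+3)*((3*(u:ℝ)+6) + 2*sN u)/6

lemma sN_nonneg (u : ℕ) : 0 ≤ sN u := Real.sqrt_nonneg _

lemma sN_sq (u : ℕ) : sN u ^ 2 = 9*(u:ℝ)^2+36*(u:ℝ)+24 := by
  rw [sN, Real.sq_sqrt (by positivity)]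
  push_cast
  ring

lemma sN_le (u : ℕ) : sN u ≤ 3*(u:ℝ)+6 := by
  have h := Real.sqrt_le_sqrt (show ((9*u^2+36*u+24 : ℕ) : ℝ) ≤ (3*(u:ℝ)+6)^2 by push_cast; nlinarith)
  rwa [Real.sqrt_sq (by positivity)] at h

lemma sN_irrational (u : ℕ) : Irrational (sN u) := by
  rw [sN]
  refine irrational_sqrt_natCast_iff.mpr ?_
  rintro ⟨k, hk⟩
  have h3 : 3 ∣ k := by
    have hdvd : (3:ℕ) ∣ k * k := ⟨3*u^2+12*u+8, by rw [← hk]; ring⟩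
    exact ((Nat.Prime.dvd_mul (by norm_num)).1 hdvd).elim id id
  obtain ⟨j, rfl⟩ := h3
  have h9 : 9*(j*j) = 9*u^2+36*u+24 := by rw [hk]; ring
  obtain ⟨X, hX⟩ : ∃ X, j*j = X := ⟨_, rfl⟩
  obtain ⟨Y, hY⟩ : ∃ Y, u^2 = Y := ⟨_, rfl⟩
  rw [hX, hY] at h9
  omega

lemma key_identity (u : ℕ) (a b : ℝ) (hsum : (3*(u:ℝ)+3)*a + 3*b = 1) :
    18*(3*(u:ℝ)+3)^2*(((3*(u:ℝ)+3)*(3*(u:ℝ)+2)*(3*(u:ℝ)+1)/6)*a^3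
      + 3*((3*(u:ℝ)+3)*(3*(u:ℝ)+2)/2)*a^2*b + 3*(3*(u:ℝ)+3)*a*b^2)
      = 18*(3*(u:ℝ)+3)^2*(LagVal u)
        + 6*((3*(u:ℝ)+3)*a - csd u)^2*((3*(u:ℝ)+3)*a - rsd u) := by
  have hs2 : sN u^2 = 9*(u:ℝ)^2+36*(u:ℝ)+24 := sN_sq u
  rw [LagVal, q1v, q2v, csd, rsd]
  push_cast
  linear_combination ((162:ℝ)*a + 486*a*b + 486*(u:ℝ)*a + 1458*(u:ℝ)*a*b + 243*(u:ℝ)*a^2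
      + 486*(u:ℝ)^2*a + 1458*(u:ℝ)^2*a*b + 729*(u:ℝ)^2*a^2 + 162*(u:ℝ)^3*a
      + 486*(u:ℝ)^3*a*b + 729*(u:ℝ)^3*a^2 + 243*(u:ℝ)^4*a^2) * hsum
    + ((-27/2 : ℝ) + (3/2)*sN u + (27/2)*a - (189/4)*(u:ℝ) + (9/2)*(u:ℝ)*sN u + (81/2)*(u:ℝ)*a
      - (243/4)*(u:ℝ)^2 + (9/2)*(u:ℝ)^2*sN u + (81/2)*(u:ℝ)^2*a - (135/4)*(u:ℝ)^3
      + (3/2)*(u:ℝ)^3*sN u + (27/2)*(u:ℝ)^3*a - (27/4)*(u:ℝ)^4) * hs2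

lemma key_ineq (u : ℕ) (a b : ℝ) (ha : 0 ≤ a) (hb : 0 ≤ b)
    (hsum : (3*(u:ℝ)+3)*a + 3*b = 1) :
    ((3*(u:ℝ)+3)*(3*(u:ℝ)+2)*(3*(u:ℝ)+1)/6)*a^3
      + 3*((3*(u:ℝ)+3)*(3*(u:ℝ)+2)/2)*a^2*b + 3*(3*(u:ℝ)+3)*a*b^2 ≤ LagVal u := by
  have hu0 : (0:ℝ) ≤ (u:ℝ) := Nat.cast_nonneg u
  have hs0 : 0 ≤ sN u := sN_nonneg u
  have hident := key_identity u a b hsum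
  have hc1 : (3*(u:ℝ)+3)*a ≤ 1 := by nlinarith
  have hrs : (1:ℝ) ≤ rsd u := by rw [rsd]; nlinarith
  have hfact : (0:ℝ) ≤ ((3*(u:ℝ)+3)*a - csd u)^2 * (rsd u - (3*(u:ℝ)+3)*a) :=
    mul_nonneg (sq_nonneg _) (by linarith)
  have h6 : 6*((3*(u:ℝ)+3)*a - csd u)^2*((3*(u:ℝ)+3)*a - rsd u) ≤ 0 := by nlinarith [hfact]
  have h18 : (0:ℝ) < 18*(3*(u:ℝ)+3)^2 := by positivity
  have hle : 18*(3*(u:ℝ)+3)^2*(((3*(u:ℝ)+3)*(3*(u:ℝ)+2)*(3*(u:ℝ)+1)/6)*a^3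
      + 3*((3*(u:ℝ)+3)*(3*(u:ℝ)+2)/2)*a^2*b + 3*(3*(u:ℝ)+3)*a*b^2)
      ≤ 18*(3*(u:ℝ)+3)^2*(LagVal u) := by linarith
  exact (mul_le_mul_iff_right₀ h18).mp hle

lemma key_eq (u : ℕ) : ∃ a b : ℝ, 0 ≤ a ∧ 0 ≤ b ∧ (3*(u:ℝ)+3)*a + 3*b = 1 ∧
    ((3*(u:ℝ)+3)*(3*(u:ℝ)+2)*(3*(u:ℝ)+1)/6)*a^3
      + 3*((3*(u:ℝ)+3)*(3*(u:ℝ)+2)/2)*a^2*b + 3*(3*(u:ℝ)+3)*a*b^2 = LagVal u := by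
  have hu0 : (0:ℝ) ≤ (u:ℝ) := Nat.cast_nonneg u
  have hs0 : 0 ≤ sN u := sN_nonneg u
  have hs2 : sN u^2 = 9*(u:ℝ)^2+36*(u:ℝ)+24 := sN_sq u
  have hsle : sN u ≤ 3*(u:ℝ)+6 := sN_le u
  have hnne : (3*(u:ℝ)+3) ≠ 0 := by positivity
  have hcs0 : 0 ≤ csd u := by rw [csd]; nlinarith
  have hcs1 : csd u ≤ 1 := by
    have h1 : ((3*(u:ℝ)+3)*sN u)^2 = (3*(u:ℝ)+3)^2*(9*(u:ℝ)^2+36*(u:ℝ)+24) := by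
      rw [mul_pow, hs2]
    have hkey : 9*(u:ℝ)^2+27*(u:ℝ)+12 ≤ (3*(u:ℝ)+3)*sN u := by
      nlinarith [h1, mul_nonneg (by positivity : (0:ℝ) ≤ 3*(u:ℝ)+3) hs0]
    rw [csd]
    nlinarith
  refine ⟨csd u/(3*(u:ℝ)+3), (1 - csd u)/3, by positivity, by linarith, by field_simp; ring, ?_⟩
  have hca : (3*(u:ℝ)+3) * (csd u/(3*(u:ℝ)+3)) = csd u := by field_simp
  have hsum : (3*(u:ℝ)+3)*(csd u/(3*(u:ℝ)+3)) + 3*((1 - csd u)/3) = 1 := by field_simp; ring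
  have hident := key_identity u (csd u/(3*(u:ℝ)+3)) ((1 - csd u)/3) hsum
  rw [hca] at hident
  have hz : 6*(csd u - csd u)^2*(csd u - rsd u) = 0 := by ring
  rw [hz, add_zero] at hident
  exact mul_left_cancel₀ (by positivity : (18:ℝ)*(3*(u:ℝ)+3)^2 ≠ 0) hident

lemma LagVal_irrational (u : ℕ) : Irrational (LagVal u) := by
  rw [LagVal]
  have hq2 : q2v u ≠ 0 := by rw [q2v]; positivity
  exact ((sN_irrational u).ratCast_mul hq2).ratCast_add (q1v u)

lemma swap_mem_Kminus (t : ℕ) (i j : Fin (3*t+3))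
    (hclass : (i.val < 3*t ∧ j.val < 3*t) ∨ (3*t ≤ i.val ∧ 3*t ≤ j.val)) :
    ∀ E ∈ Kminus t, E.image (Equiv.swap i j) ∈ Kminus t := by
  intro E hE
  rw [Kminus, Finset.mem_erase, Finset.mem_powersetCard] at hE ⊢
  obtain ⟨hne, _, hcard⟩ := hE
  refine ⟨?_, Finset.subset_univ _,
    by rw [Finset.card_image_of_injective _ (Equiv.injective _)]; exact hcard⟩
  intro hcon
  have hpred : ∀ k : Fin (3*t+3), 3*t ≤ ((Equiv.swap i j) k).val ↔ 3*t ≤ k.val := by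
    intro k
    by_cases hk1 : k = i
    · subst hk1; rw [Equiv.swap_apply_left]; omega
    by_cases hk2 : k = j
    · subst hk2; rw [Equiv.swap_apply_right]; omega
    · rw [Equiv.swap_apply_of_ne_of_ne hk1 hk2]
  have hRim : (Finset.univ.filter (fun k : Fin (3*t+3) => 3*t ≤ k.val)).image (Equiv.swap i j)
      = Finset.univ.filter (fun k : Fin (3*t+3) => 3*t ≤ k.val) := by
    ext k
    simp only [Finset.mem_image, Finset.mem_filter, Finset.mem_univ, true_and]
    constructor
    · rintro ⟨m, hm, rfl⟩
      exact (hpred m).2 hm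
    · intro hk
      exact ⟨(Equiv.swap i j) k, (hpred _).1 (by rwa [Equiv.swap_apply_self]),
        by rw [Equiv.swap_apply_self]⟩
  have himg : (E.image (Equiv.swap i j)).image (Equiv.swap i j) = E := by
    rw [Finset.image_image,
      show (Equiv.swap i j : Fin (3*t+3) → Fin (3*t+3)) ∘ (Equiv.swap i j : Fin (3*t+3) → Fin (3*t+3)) = id
        from funext fun k => Equiv.swap_apply_self i j k]
    exact Finset.image_id
  apply hne
  have := congrArg (Finset.image (Equiv.swap i j)) hcon
  rwa [himg, hRim] at this

lemma maximizer_pair (t : ℕ) (x : Fin (3*t+3) → ℝ) (hx0 : ∀ i, 0 ≤ x i) (hx1 : ∑ i, x i = 1)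
    (hmax : ∀ y ∈ stdSimplex ℝ (Fin (3*t+3)), lagPoly (Kminus t) y ≤ lagPoly (Kminus t) x)
    (i j : Fin (3*t+3)) (hij : i ≠ j)
    (hsym : ∀ E ∈ Kminus t, E.image (Equiv.swap i j) ∈ Kminus t) :
    x i = x j ∨ ∀ E ∈ Kminus t, i ∈ E → j ∈ E → ∏ k ∈ (E.erase i).erase j, x k = 0 := by
  set m := (x i + x j)/2 with hm
  set y := Function.update (Function.update x i m) j m with hy
  have hm0 : 0 ≤ m := by rw [hm]; have := hx0 i; have := hx0 j; linarith
  have hy0 : ∀ k, 0 ≤ y k := by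
    intro k
    by_cases hk1 : k = j
    · rw [hk1, hy, Function.update_self]; exact hm0
    by_cases hk2 : k = i
    · rw [hk2, hy, Function.update_of_ne hij, Function.update_self]; exact hm0
    · rw [hy, Function.update_of_ne hk1, Function.update_of_ne hk2]; exact hx0 k
  have hysum : ∑ k, y k = 1 := by
    rw [hy, Finset.sum_update_of_mem (Finset.mem_univ j),
      Finset.sum_update_of_mem (by simp [hij] : i ∈ Finset.univ \ {j})]
    have hrest : ∑ k ∈ ((Finset.univ \ {j}) \ {i}), x k = 1 - x i - x j := by
      have h1 : ∑ k ∈ ((Finset.univ \ {j}) \ {i}), x k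
          = (∑ k ∈ (Finset.univ \ {j}), x k) - ∑ k ∈ ({i} : Finset (Fin (3*t+3))), x k :=
        Finset.sum_sdiff_eq_sub (by simp [hij])
      have h2 : ∑ k ∈ (Finset.univ \ {j}), x k
          = (∑ k, x k) - ∑ k ∈ ({j} : Finset (Fin (3*t+3))), x k :=
        Finset.sum_sdiff_eq_sub (Finset.subset_univ _)
      rw [h1, h2, hx1, Finset.sum_singleton, Finset.sum_singleton]
      ring
    rw [hrest, hm]
    linarith [hx1]
  have hyle : lagPoly (Kminus t) y ≤ lagPoly (Kminus t) x := hmax y ⟨hy0, hysum⟩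
  have havg := lagPoly_avg (Kminus t) i j hij hsym x
  rw [← hm, ← hy] at havg
  set C := ∑ E ∈ (Kminus t).filter (fun E => i ∈ E ∧ j ∈ E), ∏ k ∈ (E.erase i).erase j, x k
    with hC
  have hCnn : 0 ≤ C :=
    Finset.sum_nonneg fun E _ => Finset.prod_nonneg fun k _ => hx0 k
  have hquad : 0 ≤ m^2 - x i * x j := by
    rw [hm]; nlinarith [sq_nonneg (x i - x j)]
  have hCzero : C * (m^2 - x i * x j) = 0 :=
    le_antisymm (by linarith) (mul_nonneg hCnn hquad)
  rcases mul_eq_zero.1 hCzero with hCz | hq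
  · right
    intro E hE hiE hjE
    have hterm := (Finset.sum_eq_zero_iff_of_nonneg
      (fun E _ => Finset.prod_nonneg fun k _ => hx0 k)).1 hCz E
      (Finset.mem_filter.2 ⟨hE, hiE, hjE⟩)
    exact hterm
  · left
    have h2 : (x i - x j)^2 = 0 := by rw [hm] at hq; linear_combination 4*hq
    have := pow_eq_zero_iff (n := 2) (by norm_num) |>.1 h2
    linarith [sub_eq_zero.1 this]


lemma card_R_axiom (t : ℕ) : (Finset.univ.filter (fun m : Fin (3*t+3) => 3*t ≤ m.val)).card = 3 :=
  card_Rpart t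

lemma cast_choose3 : ∀ n : ℕ, (((n+3).choose 3 : ℕ) : ℝ) = ((n:ℝ)+3)*((n:ℝ)+2)*((n:ℝ)+1)/6 := by
  intro n
  induction n with
  | zero => norm_num
  | succ k ih =>
    have h : (k+1+3).choose 3 = (k+3).choose 2 + (k+3).choose 3 := by
      rw [show k+1+3 = (k+3)+1 from by ring, show (3:ℕ) = 2+1 from rfl, Nat.choose_succ_succ]
    rw [h]
    push_cast [ih, Nat.cast_choose_two]
    ring

lemma cast_choose2 (n : ℕ) : (((n+3).choose 2 : ℕ) : ℝ) = ((n:ℝ)+3)*((n:ℝ)+2)/2 := by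
  rw [Nat.cast_choose_two]
  push_cast
  ring

-- x k = 0 from vanishing triple products
lemma vanish_aux (t : ℕ) (x : Fin (3*t+3) → ℝ) (i j k : Fin (3*t+3))
    (hij : i ≠ j) (hki : k ≠ i) (hkj : k ≠ j)
    (hne : ({i,j,k} : Finset (Fin (3*t+3))) ≠ Finset.univ.filter (fun m => 3*t ≤ m.val))
    (hvan : ∀ E ∈ Kminus t, i ∈ E → j ∈ E → ∏ m ∈ (E.erase i).erase j, x m = 0) :
    x k = 0 := by
  have hjk : j ∉ ({k} : Finset (Fin (3*t+3))) := by simp [hkj.symm]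
  have hik : i ∉ ({j,k} : Finset (Fin (3*t+3))) := by simp [hij, hki.symm]
  have hcard : ({i,j,k} : Finset (Fin (3*t+3))).card = 3 := by
    rw [Finset.card_insert_of_notMem hik, Finset.card_insert_of_notMem hjk,
      Finset.card_singleton]
  have hmem : ({i,j,k} : Finset (Fin (3*t+3))) ∈ Kminus t :=
    Finset.mem_erase.2 ⟨hne, Finset.mem_powersetCard.2 ⟨Finset.subset_univ _, hcard⟩⟩
  have h := hvan _ hmem (by simp) (by simp)
  rw [show ({i,j,k} : Finset (Fin (3*t+3))).erase i = {j,k} from Finset.erase_insert hik,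
    show ({j,k} : Finset (Fin (3*t+3))).erase j = {k} from Finset.erase_insert hjk,
    Finset.prod_singleton] at h
  exact h

lemma lagPoly_zero_pair (t : ℕ) (x : Fin (3*t+3) → ℝ) (i j : Fin (3*t+3))
    (hvanish : ∀ k, k ≠ i → k ≠ j → x k = 0) : lagPoly (Kminus t) x = 0 := by
  rw [lagPoly]
  apply Finset.sum_eq_zero
  intro E hE
  rw [Kminus, Finset.mem_erase, Finset.mem_powersetCard] at hE
  obtain ⟨hne, _, hcard⟩ := hE
  have hex : ∃ k ∈ E, k ≠ i ∧ k ≠ j := by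
    by_contra hcon
    push_neg at hcon
    have hsub : E ⊆ {i, j} := by
      intro k hk
      rcases Classical.em (k = i) with h | h
      · simp [h]
      · simp [hcon k hk h]
    have := Finset.card_le_card hsub
    have h2 : ({i, j} : Finset (Fin (3*t+3))).card ≤ 2 :=
      (Finset.card_insert_le _ _).trans (by simp)
    omega
  obtain ⟨k, hkE, hki, hkj⟩ := hex
  exact Finset.prod_eq_zero hkE (hvanish k hki hkj)

lemma lagPoly_zero_special (t : ℕ) (x : Fin (3*t+3) → ℝ)
    (hvanish : ∀ k : Fin (3*t+3), k.val < 3*t → x k = 0) : lagPoly (Kminus t) x = 0 := by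
  rw [lagPoly]
  apply Finset.sum_eq_zero
  intro E hE
  rw [Kminus, Finset.mem_erase, Finset.mem_powersetCard] at hE
  obtain ⟨hne, _, hcard⟩ := hE
  have hex : ∃ k ∈ E, k.val < 3*t := by
    by_contra hcon
    push_neg at hcon
    have hsub : E ⊆ Finset.univ.filter (fun m : Fin (3*t+3) => 3*t ≤ m.val) := by
      intro k hk
      exact Finset.mem_filter.2 ⟨Finset.mem_univ _, hcon k hk⟩
    have hcardR : (Finset.univ.filter (fun m : Fin (3*t+3) => 3*t ≤ m.val)).card = 3 :=
      card_R_axiom t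
    exact hne (Finset.eq_of_subset_of_card_le hsub (by omega))
  obtain ⟨k, hkE, hk⟩ := hex
  exact Finset.prod_eq_zero hkE (hvanish k hk)

/-- For every positive integer `t`, the Lagrangian of `K_{3(t+1)}^{3-}` is irrational. -/
theorem lagrangian_Kminus_irrational (t : ℕ) (ht : 1 ≤ t) (L : ℝ)
    (hL : IsGreatest (lagValues (Kminus t)) L) : Irrational L := by
  obtain ⟨u, rfl⟩ : ∃ u, t = u + 1 := ⟨t-1, by omega⟩
  obtain ⟨x, hxs, hxval⟩ := hL.1
  have hub : ∀ y ∈ stdSimplex ℝ (Fin (3*(u+1)+3)), lagPoly (Kminus (u+1)) y ≤ L :=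
    fun y hy => hL.2 ⟨y, hy, rfl⟩
  obtain ⟨hx0, hx1⟩ := hxs
  have hmax : ∀ y ∈ stdSimplex ℝ (Fin (3*(u+1)+3)),
      lagPoly (Kminus (u+1)) y ≤ lagPoly (Kminus (u+1)) x := by
    rw [hxval]; exact hub
  -- cast facts
  have hch3 : (((3*(u+1)).choose 3 : ℕ) : ℝ) = (3*(u:ℝ)+3)*(3*(u:ℝ)+2)*(3*(u:ℝ)+1)/6 := by
    rw [show 3*(u+1) = 3*u+3 from by ring]
    rw [show (((3*u+3).choose 3 : ℕ) : ℝ) = (((3*u:ℕ)+3).choose 3 : ℕ) from by norm_num,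
      cast_choose3 (3*u)]
    push_cast; ring
  have hch2 : (((3*(u+1)).choose 2 : ℕ) : ℝ) = (3*(u:ℝ)+3)*(3*(u:ℝ)+2)/2 := by
    rw [show 3*(u+1) = 3*u+3 from by ring]
    rw [show (((3*u+3).choose 2 : ℕ) : ℝ) = (((3*u:ℕ)+3).choose 2 : ℕ) from by norm_num,
      cast_choose2 (3*u)]
    push_cast; ring
  -- positivity of L
  have hLpos : 0 < L := by
    set a0 : ℝ := 1/(3*(u:ℝ)+3) with ha0
    have ha0pos : 0 < a0 := by rw [ha0]; positivity
    have hmem : (fun i : Fin (3*(u+1)+3) => if i.val < 3*(u+1) then a0 else 0)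
        ∈ stdSimplex ℝ (Fin (3*(u+1)+3)) := by
      refine ⟨fun i => ?_, ?_⟩
      · by_cases h : i.val < 3*(u+1) <;> simp [h] <;> positivity
      · rw [sum_eval (u+1) a0 0, ha0]
        have h3 : (3*(u:ℝ)+3) ≠ 0 := by positivity
        push_cast
        field_simp
        ring
    have h1 := hub _ hmem
    rw [lagPoly_eval (u+1) a0 0] at h1
    have hc3pos : (0:ℝ) < ((3*(u+1)).choose 3 : ℕ) := by
      have := Nat.choose_pos (show 3 ≤ 3*(u+1) by omega)
      exact_mod_cast this
    nlinarith [pow_pos ha0pos 3]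
  have hLne : lagPoly (Kminus (u+1)) x ≠ 0 := by rw [hxval]; linarith
  -- pairwise equalities
  set i0 : Fin (3*(u+1)+3) := ⟨0, by omega⟩ with hi0
  set j0 : Fin (3*(u+1)+3) := ⟨3*(u+1), by omega⟩ with hj0
  have hi0v : i0.val < 3*(u+1) := by
    rw [hi0]; show (0:ℕ) < 3*(u+1); omega
  have hj0v : 3*(u+1) ≤ j0.val := by
    rw [hj0]
  have hxa : ∀ i : Fin (3*(u+1)+3), i.val < 3*(u+1) → x i = x i0 := by
    intro i hi
    by_cases hii : i = i0
    · rw [hii]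
    rcases maximizer_pair (u+1) x hx0 hx1 hmax i i0 hii
      (swap_mem_Kminus (u+1) i i0 (Or.inl ⟨hi, hi0v⟩)) with h | hvan
    · exact h
    · exfalso
      apply hLne
      apply lagPoly_zero_pair (u+1) x i i0
      intro k hki hki0
      exact vanish_aux (u+1) x i i0 k hii hki hki0
        (fun hcon => by
          have : i ∈ Finset.univ.filter (fun m : Fin (3*(u+1)+3) => 3*(u+1) ≤ m.val) :=
            hcon ▸ (by simp : i ∈ ({i, i0, k} : Finset (Fin (3*(u+1)+3))))
          rw [Finset.mem_filter] at this
          omega) hvan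
  have hxb : ∀ i : Fin (3*(u+1)+3), 3*(u+1) ≤ i.val → x i = x j0 := by
    intro i hi
    by_cases hii : i = j0
    · rw [hii]
    rcases maximizer_pair (u+1) x hx0 hx1 hmax i j0 hii
      (swap_mem_Kminus (u+1) i j0 (Or.inr ⟨hi, hj0v⟩)) with h | hvan
    · exact h
    · exfalso
      apply hLne
      apply lagPoly_zero_special (u+1) x
      intro k hk
      have hki : k ≠ i := fun h => by rw [h] at hk; omega
      have hkj : k ≠ j0 := fun h => by rw [h] at hk; omega
      exact vanish_aux (u+1) x i j0 k hii hki hkj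
        (fun hcon => by
          have : k ∈ Finset.univ.filter (fun m : Fin (3*(u+1)+3) => 3*(u+1) ≤ m.val) :=
            hcon ▸ (by simp : k ∈ ({i, j0, k} : Finset (Fin (3*(u+1)+3))))
          rw [Finset.mem_filter] at this
          omega) hvan
  set a : ℝ := x i0 with ha
  set b : ℝ := x j0 with hb
  have hxfun : x = fun i => if i.val < 3*(u+1) then a else b := by
    funext i
    by_cases h : i.val < 3*(u+1)
    · simp only [h, if_true]; exact hxa i h
    · simp only [h, if_false]; exact hxb i (le_of_not_gt h)
  have ha0 : 0 ≤ a := hx0 i0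
  have hb0 : 0 ≤ b := hx0 j0
  have hsum' : (3*(u:ℝ)+3)*a + 3*b = 1 := by
    rw [hxfun] at hx1
    rw [sum_eval] at hx1
    push_cast at hx1
    linarith
  have hxLag : L = ((3*(u:ℝ)+3)*(3*(u:ℝ)+2)*(3*(u:ℝ)+1)/6)*a^3
      + 3*((3*(u:ℝ)+3)*(3*(u:ℝ)+2)/2)*a^2*b + 3*(3*(u:ℝ)+3)*a*b^2 := by
    rw [← hxval, hxfun, lagPoly_eval, hch3, hch2]
    push_cast
    ring
  have hle : L ≤ LagVal u := hxLag ▸ key_ineq u a b ha0 hb0 hsum'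
  have hge : LagVal u ≤ L := by
    obtain ⟨a', b', ha', hb', hsum'', hval''⟩ := key_eq u
    have hymem : (fun i : Fin (3*(u+1)+3) => if i.val < 3*(u+1) then a' else b')
        ∈ stdSimplex ℝ (Fin (3*(u+1)+3)) := by
      refine ⟨fun i => ?_, ?_⟩
      · by_cases h : i.val < 3*(u+1) <;> simp [h] <;> assumption
      · rw [sum_eval (u+1) a' b']
        push_cast
        linarith
    have h1 := hub _ hymem
    rw [lagPoly_eval (u+1) a' b', hch3, hch2] at h1
    rw [← hval'']
    calc ((3*(u:ℝ)+3)*(3*(u:ℝ)+2)*(3*(u:ℝ)+1)/6)*a'^3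
          + 3*((3*(u:ℝ)+3)*(3*(u:ℝ)+2)/2)*a'^2*b' + 3*(3*(u:ℝ)+3)*a'*b'^2
        = (3*(u:ℝ)+3)*(3*(u:ℝ)+2)*(3*(u:ℝ)+1)/6*a'^3
          + 3*((3*(u:ℝ)+3)*(3*(u:ℝ)+2)/2)*a'^2*b' + 3*(3*((u:ℝ)+1))*a'*b'^2 := by push_cast; ring
      _ ≤ L := by
          convert h1 using 2
          push_cast
          ring
  have hfin : L = LagVal u := le_antisymm hle hge
  rw [hfin]
  exact LagVal_irrational u
end

section
/- For every positive integer t, with s = 3t, the function f(a) = 2a^3 - (s+3)a^2 + 2a on the interval [0, 1/s] attains its maximum at a(s) = (s+3 - sqrt(s^2+6s-3))/6, and 0 < a(s) < 1/s. -/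
/-- For every positive integer `t`, with `s = 3t`, the function
`f(a) = 2a³ - (s+3)a² + 2a` attains its maximum on `[0, 1/s]` at
`a(s) = (s + 3 - √(s² + 6s - 3))/6`, and `0 < a(s) < 1/s`. -/
theorem cubic_max (t : ℕ) (ht : 1 ≤ t) :
    let s : ℝ := 3 * t
    let a : ℝ := (s + 3 - Real.sqrt (s ^ 2 + 6 * s - 3)) / 6
    0 < a ∧ a < 1 / s ∧
      IsMaxOn (fun x : ℝ => 2 * x ^ 3 - (s + 3) * x ^ 2 + 2 * x) (Set.Icc 0 (1 / s)) a := by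
  intro s a
  have hs : (3 : ℝ) ≤ s := by
    have : (1 : ℝ) ≤ (t : ℝ) := by exact_mod_cast ht
    simp only [s]; linarith
  have hs0 : (0 : ℝ) < s := by linarith
  have hD : (0 : ℝ) ≤ s ^ 2 + 6 * s - 3 := by nlinarith
  set r := Real.sqrt (s ^ 2 + 6 * s - 3) with hr
  have hr0 : 0 ≤ r := Real.sqrt_nonneg _
  have hrsq : r ^ 2 = s ^ 2 + 6 * s - 3 := Real.sq_sqrt hD
  have hrlt : r < s + 3 := by
    have : r < Real.sqrt ((s + 3) ^ 2) := by
      apply Real.sqrt_lt_sqrt hD; nlinarith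
    rwa [Real.sqrt_sq (by linarith)] at this
  have ha0 : 0 < a := by
    simp only [a]; linarith
  have hrgt : s + 3 - 6 / s < r := by
    have h1 : (s + 3 - 6 / s) ^ 2 < s ^ 2 + 6 * s - 3 := by
      have hs' : s ≠ 0 := ne_of_gt hs0
      field_simp
      nlinarith [sq_nonneg s, mul_pos hs0 hs0]
    nlinarith [hrsq, hr0, sq_nonneg (r - (s + 3 - 6 / s))]
  have ha1 : a < 1 / s := by
    simp only [a]
    rw [div_lt_div_iff₀ (by norm_num) hs0]
    nlinarith [hrgt, div_mul_cancel₀ (6:ℝ) (ne_of_gt hs0)]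
  have hkey : 3 * a ^ 2 - (s + 3) * a + 1 = 0 := by
    have : a = (s + 3 - r) / 6 := rfl
    rw [this]
    field_simp
    nlinarith [hrsq]
  refine ⟨ha0, ha1, ?_⟩
  intro x hx
  simp only [Set.mem_Icc] at hx
  obtain ⟨hx0, hx1⟩ := hx
  simp only [Set.mem_setOf_eq]
  have hxs : x ≤ 1 / 3 := le_trans hx1 (by
    rw [div_le_div_iff₀ hs0 (by norm_num)]; linarith)
  have has : a ≤ 1 / 3 := le_of_lt (lt_of_lt_of_le ha1 (by
    rw [div_le_div_iff₀ hs0 (by norm_num)]; linarith))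
  have hr3 : 0 < (s + 3) / 2 - 2 * a - x := by nlinarith
  nlinarith [sq_nonneg (x - a), mul_nonneg (sq_nonneg (x - a)) (le_of_lt hr3), hkey]
end

section
/- Let G be a 3-graph on m vertices and let {v_1, v_2} be a symmetric pair of vertices in G with codegree d(v_1,v_2) = k >= a+b+1 where a, b are positive integers. Then the Lagrangian of the (a,b)-mix-crossed blowup G box_{(a,b)} {v_1,v_2} equals the Lagrangian of G. -/
open Finset

/-- The codegree neighbourhood `N_G(v₁, v₂)` of a pair of vertices in a 3-graph. -/
def coNbhd {m : ℕ} (G : Finset (Finset (Fin m))) (v₁ v₂ : Fin m) : Finset (Fin m) :=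
  Finset.univ.filter (fun w => ({w, v₁, v₂} : Finset (Fin m)) ∈ G)

/-- The `(a,b)`-mix-crossed blowup of a 3-graph `G` on the pair `{v₁, v₂}`, where
`A, B, C` is the partition of `N_G(v₁, v₂)` into the three classes of sizes `a`, `b` and
`k - a - b`. The two new vertices are `Sum.inr 0 = v₁'` and `Sum.inr 1 = v₂'`: all edges
through both `v₁` and `v₂` are removed, `v₁'` and `v₂'` are clones of `v₁` and `v₂`, and
the prescribed new edges through `A`, `B`, `C` are added. -/
def mixBlowup {m : ℕ} (G : Finset (Finset (Fin m))) (v₁ v₂ : Fin m)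
    (A B C : Finset (Fin m)) : Finset (Finset (Fin m ⊕ Fin 2)) :=
  ((G.filter (fun E => ¬ (v₁ ∈ E ∧ v₂ ∈ E))).image (Finset.image Sum.inl))
  ∪ ((G.filter (fun E => v₁ ∈ E ∧ v₂ ∉ E)).image
      (fun E => insert (Sum.inr 0) ((E.erase v₁).image Sum.inl)))
  ∪ ((G.filter (fun E => v₂ ∈ E ∧ v₁ ∉ E)).image
      (fun E => insert (Sum.inr 1) ((E.erase v₂).image Sum.inl)))
  ∪ A.biUnion (fun w =>
      {{Sum.inl w, Sum.inl v₁, Sum.inl v₂}, {Sum.inl w, Sum.inl v₁, Sum.inr 1},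
       {Sum.inl w, Sum.inr 0, Sum.inl v₂}, {Sum.inl w, Sum.inr 0, Sum.inr 1}})
  ∪ B.biUnion (fun w =>
      {{Sum.inl w, Sum.inl v₁, Sum.inr 0}, {Sum.inl w, Sum.inl v₁, Sum.inr 1},
       {Sum.inl w, Sum.inl v₂, Sum.inr 0}, {Sum.inl w, Sum.inl v₂, Sum.inr 1}})
  ∪ C.biUnion (fun w =>
      {{Sum.inl w, Sum.inl v₁, Sum.inr 0}, {Sum.inl w, Sum.inl v₁, Sum.inl v₂},
       {Sum.inl w, Sum.inr 0, Sum.inr 1}, {Sum.inl w, Sum.inl v₂, Sum.inr 1}})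

section Gdecomp
open Sum
variable {m : ℕ} (G : Finset (Finset (Fin m))) (v₁ v₂ : Fin m)

def S0 (x : Fin m → ℝ) : ℝ :=
  ∑ E ∈ G.filter (fun E => ¬ v₁ ∈ E ∧ ¬ v₂ ∈ E), ∏ i ∈ E, x i
def S1 (x : Fin m → ℝ) : ℝ :=
  ∑ E ∈ G.filter (fun E => v₁ ∈ E ∧ ¬ v₂ ∈ E), ∏ i ∈ E.erase v₁, x i
def S2 (x : Fin m → ℝ) : ℝ :=
  ∑ E ∈ G.filter (fun E => ¬ v₁ ∈ E ∧ v₂ ∈ E), ∏ i ∈ E.erase v₂, x i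

lemma coNbhd_ne (hG3 : ∀ E ∈ G, E.card = 3) {w : Fin m} (hw : w ∈ coNbhd G v₁ v₂) :
    w ≠ v₁ ∧ w ≠ v₂ := by
  simp only [coNbhd, mem_filter, mem_univ, true_and] at hw
  have h3 := hG3 _ hw
  have key : ¬ (w = v₁ ∨ w = v₂) := by
    intro h
    have hsub : ({w, v₁, v₂} : Finset (Fin m)) ⊆ {v₁, v₂} := by
      intro z hz; simp only [mem_insert, mem_singleton] at hz ⊢
      rcases h with rfl | rfl <;> tauto
    have h2 := card_le_card hsub
    have h4 := card_insert_le v₁ ({v₂} : Finset (Fin m))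
    simp only [card_singleton] at h4
    omega
  exact ⟨fun h => key (Or.inl h), fun h => key (Or.inr h)⟩

lemma both_eq (hG3 : ∀ E ∈ G, E.card = 3) (hne : v₁ ≠ v₂) :
    G.filter (fun E => v₁ ∈ E ∧ v₂ ∈ E)
      = (coNbhd G v₁ v₂).image (fun w => {w, v₁, v₂}) := by
  ext E
  simp only [mem_filter, mem_image, coNbhd, mem_univ, true_and]
  constructor
  · rintro ⟨hE, h1, h2⟩
    have h3 := hG3 _ hE
    have hv2 : v₂ ∈ E.erase v₁ := by simp [mem_erase, Ne.symm hne, h2]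
    have hc : ((E.erase v₁).erase v₂).card = 1 := by
      rw [card_erase_of_mem hv2, card_erase_of_mem h1, h3]
    obtain ⟨w, hw⟩ := card_eq_one.mp hc
    have hwm : w ∈ (E.erase v₁).erase v₂ := by simp [hw]
    have hwE : w ∈ E := mem_of_mem_erase (mem_of_mem_erase hwm)
    have hw1 : w ≠ v₁ := ne_of_mem_erase (mem_of_mem_erase hwm)
    have hw2 : w ≠ v₂ := ne_of_mem_erase hwm
    have hEeq : E = {w, v₁, v₂} := by
      have h5 := congrArg (insert v₂) hw
      rw [insert_erase hv2] at h5
      have h6 := congrArg (insert v₁) h5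
      rw [insert_erase h1] at h6
      rw [h6]; ext z
      simp only [mem_insert, mem_singleton]; tauto
    exact ⟨w, hEeq ▸ hE, hEeq.symm⟩
  · rintro ⟨w, hw, rfl⟩
    exact ⟨hw, by simp, by simp⟩

lemma lagPoly_decomp (hG3 : ∀ E ∈ G, E.card = 3) (hne : v₁ ≠ v₂) (x : Fin m → ℝ) :
    lagPoly G x = S0 G v₁ v₂ x + x v₁ * S1 G v₁ v₂ x + x v₂ * S2 G v₁ v₂ x
      + x v₁ * x v₂ * ∑ w ∈ coNbhd G v₁ v₂, x w := by
  classical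
  have h1 : lagPoly G x =
      (∑ E ∈ G.filter (fun E => v₁ ∈ E ∧ v₂ ∈ E), ∏ i ∈ E, x i)
      + (∑ E ∈ G.filter (fun E => v₁ ∈ E ∧ ¬ v₂ ∈ E), ∏ i ∈ E, x i)
      + (∑ E ∈ G.filter (fun E => ¬ v₁ ∈ E ∧ v₂ ∈ E), ∏ i ∈ E, x i)
      + S0 G v₁ v₂ x := by
    unfold lagPoly S0
    rw [← sum_filter_add_sum_filter_not G (fun E => v₁ ∈ E),
      ← sum_filter_add_sum_filter_not (G.filter (fun E => v₁ ∈ E)) (fun E => v₂ ∈ E),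
      ← sum_filter_add_sum_filter_not (G.filter (fun E => ¬ v₁ ∈ E)) (fun E => v₂ ∈ E),
      filter_filter, filter_filter, filter_filter, filter_filter]
    ring
  have h2 : (∑ E ∈ G.filter (fun E => v₁ ∈ E ∧ ¬ v₂ ∈ E), ∏ i ∈ E, x i)
      = x v₁ * S1 G v₁ v₂ x := by
    unfold S1; rw [mul_sum]
    refine sum_congr rfl fun E hE => ?_
    rw [mem_filter] at hE
    exact (mul_prod_erase E x hE.2.1).symm
  have h3 : (∑ E ∈ G.filter (fun E => ¬ v₁ ∈ E ∧ v₂ ∈ E), ∏ i ∈ E, x i)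
      = x v₂ * S2 G v₁ v₂ x := by
    unfold S2; rw [mul_sum]
    refine sum_congr rfl fun E hE => ?_
    rw [mem_filter] at hE
    exact (mul_prod_erase E x hE.2.2).symm
  have h4 : (∑ E ∈ G.filter (fun E => v₁ ∈ E ∧ v₂ ∈ E), ∏ i ∈ E, x i)
      = x v₁ * x v₂ * ∑ w ∈ coNbhd G v₁ v₂, x w := by
    rw [both_eq G v₁ v₂ hG3 hne, sum_image, mul_sum]
    · refine sum_congr rfl fun w hw => ?_
      obtain ⟨hw1, hw2⟩ := coNbhd_ne G v₁ v₂ hG3 hw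
      rw [show ({w, v₁, v₂} : Finset (Fin m)) = insert w {v₁, v₂} from rfl,
        prod_insert (by simp [hw1, hw2]), prod_insert (by simp [hne]), prod_singleton]
      ring
    · intro w hw w' hw' h
      obtain ⟨hw1, hw2⟩ := coNbhd_ne G v₁ v₂ hG3 hw
      have : w ∈ ({w', v₁, v₂} : Finset (Fin m)) := by dsimp only at h; rw [← h]; simp
      simp only [mem_insert, mem_singleton] at this
      tauto
  rw [h1, h2, h3, h4]; ring

lemma S1_eq_S2 (hne : v₁ ≠ v₂)
    (hsym : ∀ S : Finset (Fin m), v₁ ∉ S → v₂ ∉ S → (insert v₁ S ∈ G ↔ insert v₂ S ∈ G))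
    (x : Fin m → ℝ) : S1 G v₁ v₂ x = S2 G v₁ v₂ x := by
  unfold S1 S2
  refine sum_bij' (fun E _ => insert v₂ (E.erase v₁)) (fun E _ => insert v₁ (E.erase v₂))
    ?_ ?_ ?_ ?_ ?_
  · intro E hE
    rw [mem_filter] at hE ⊢
    obtain ⟨hEG, h1, h2⟩ := hE
    have hnot1 : v₁ ∉ E.erase v₁ := notMem_erase _ _
    have hnot2 : v₂ ∉ E.erase v₁ := fun h => h2 (mem_of_mem_erase h)
    refine ⟨?_, ?_, by simp⟩
    · rw [← hsym _ hnot1 hnot2, insert_erase h1]; exact hEG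
    · simp only [mem_insert]
      push_neg
      exact ⟨hne, hnot1⟩
  · intro E hE
    rw [mem_filter] at hE ⊢
    obtain ⟨hEG, h1, h2⟩ := hE
    have hnot2 : v₂ ∉ E.erase v₂ := notMem_erase _ _
    have hnot1 : v₁ ∉ E.erase v₂ := fun h => h1 (mem_of_mem_erase h)
    refine ⟨?_, by simp, ?_⟩
    · rw [hsym _ hnot1 hnot2, insert_erase h2]; exact hEG
    · simp only [mem_insert]
      push_neg
      exact ⟨Ne.symm hne, hnot2⟩
  · intro E hE
    rw [mem_filter] at hE
    rw [erase_insert (fun h => hE.2.2 (mem_of_mem_erase h)), insert_erase hE.2.1]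
  · intro E hE
    rw [mem_filter] at hE
    rw [erase_insert (fun h => hE.2.1 (mem_of_mem_erase h)), insert_erase hE.2.2]
  · intro E hE
    rw [mem_filter] at hE
    rw [erase_insert (fun h => hE.2.2 (mem_of_mem_erase h))]

end Gdecomp


section quad
variable {ι : Type*} [DecidableEq ι]
variable {u v r s g g' : ι}

def quadA (g u v r s : ι) : Finset (Finset ι) := {{g,u,v},{g,u,s},{g,r,v},{g,r,s}}
def quadB (g u v r s : ι) : Finset (Finset ι) := {{g,u,r},{g,u,s},{g,v,r},{g,v,s}}
def quadC (g u v r s : ι) : Finset (Finset ι) := {{g,u,r},{g,u,v},{g,r,s},{g,v,s}}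

set_option maxHeartbeats 1000000 in
example (huv : u ≠ v) (hur : u ≠ r) (hus : u ≠ s) (hvr : v ≠ r) (hvs : v ≠ s) (hrs : r ≠ s)
    (hgu : g ≠ u) (hgv : g ≠ v) (hgr : g ≠ r) (hgs : g ≠ s)
    (hgu' : g' ≠ u) (hgv' : g' ≠ v) (hgr' : g' ≠ r) (hgs' : g' ≠ s)
    {e : Finset ι} (he : e ∈ quadA g u v r s) (he' : e ∈ quadB g' u v r s) : g = g' := by
  have n1 := Ne.symm huv; have n2 := Ne.symm hur; have n3 := Ne.symm hus
  have n4 := Ne.symm hvr; have n5 := Ne.symm hvs; have n6 := Ne.symm hrs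
  have m1 := Ne.symm hgu; have m2 := Ne.symm hgv; have m3 := Ne.symm hgr; have m4 := Ne.symm hgs
  have m5 := Ne.symm hgu'; have m6 := Ne.symm hgv'; have m7 := Ne.symm hgr'; have m8 := Ne.symm hgs'
  simp only [quadA, quadB, mem_insert, mem_singleton] at he he'
  rcases he with h|h|h|h <;> rcases he' with h'|h'|h'|h' <;>
  · have heq := h.symm.trans h'
    have key := Finset.ext_iff.mp heq
    have k1 := key u; have k2 := key v; have k3 := key r; have k4 := key s
    have k5 := key g; have k6 := key g'
    simp only [mem_insert, mem_singleton, huv, hur, hus, hvr, hvs, hrs,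
      hgu, hgv, hgr, hgs, hgu', hgv', hgr', hgs',
      n1, n2, n3, n4, n5, n6, m1, m2, m3, m4, m5, m6, m7, m8,
      ne_eq, not_false_eq_true, false_or, or_false, eq_self_iff_true, true_or, iff_true,
      true_iff, false_iff, iff_false, not_or] at k1 k2 k3 k4 k5 k6
    all_goals tauto
end quad

section quadsum
variable {ι : Type*} [DecidableEq ι]
variable {u v r s g : ι}

lemma tripleNe {a b c d e f : ι} (x : ι) (hx : x ∈ ({a,b,c} : Finset ι))
    (hx' : x ∉ ({d,e,f} : Finset ι)) : ({a,b,c} : Finset ι) ≠ {d,e,f} :=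
  fun h => hx' (h ▸ hx)

lemma sumA (y : ι → ℝ)
    (huv : u ≠ v) (hur : u ≠ r) (hus : u ≠ s) (hvr : v ≠ r) (hvs : v ≠ s) (hrs : r ≠ s)
    (hgu : g ≠ u) (hgv : g ≠ v) (hgr : g ≠ r) (hgs : g ≠ s) :
    ∑ e ∈ quadA g u v r s, ∏ i ∈ e, y i = y g * ((y u + y r) * (y v + y s)) := by
  have n1 := Ne.symm huv; have n2 := Ne.symm hur; have n3 := Ne.symm hus
  have n4 := Ne.symm hvr; have n5 := Ne.symm hvs; have n6 := Ne.symm hrs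
  have m1 := Ne.symm hgu; have m2 := Ne.symm hgv; have m3 := Ne.symm hgr; have m4 := Ne.symm hgs
  unfold quadA
  rw [sum_insert (by simp only [mem_insert, mem_singleton, not_or]; exact ⟨tripleNe v (by simp) (by simp [huv,hur,hus,hvr,hvs,hrs,hgu,hgv,hgr,hgs,n1,n2,n3,n4,n5,n6,m1,m2,m3,m4]), tripleNe u (by simp) (by simp [huv,hur,hus,hvr,hvs,hrs,hgu,hgv,hgr,hgs,n1,n2,n3,n4,n5,n6,m1,m2,m3,m4]), tripleNe u (by simp) (by simp [huv,hur,hus,hvr,hvs,hrs,hgu,hgv,hgr,hgs,n1,n2,n3,n4,n5,n6,m1,m2,m3,m4])⟩),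
    sum_insert (by simp only [mem_insert, mem_singleton, not_or]; exact ⟨tripleNe u (by simp) (by simp [huv,hur,hus,hvr,hvs,hrs,hgu,hgv,hgr,hgs,n1,n2,n3,n4,n5,n6,m1,m2,m3,m4]), tripleNe u (by simp) (by simp [huv,hur,hus,hvr,hvs,hrs,hgu,hgv,hgr,hgs,n1,n2,n3,n4,n5,n6,m1,m2,m3,m4])⟩),
    sum_insert (by simp only [mem_singleton]; exact tripleNe v (by simp) (by simp [huv,hur,hus,hvr,hvs,hrs,hgu,hgv,hgr,hgs,n1,n2,n3,n4,n5,n6,m1,m2,m3,m4])),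
    sum_singleton]
  rw [prod_insert (by simp [huv,hur,hus,hvr,hvs,hrs,hgu,hgv,hgr,hgs,n1,n2,n3,n4,n5,n6,m1,m2,m3,m4]), prod_insert (by simp [huv,hur,hus,hvr,hvs,hrs,hgu,hgv,hgr,hgs,n1,n2,n3,n4,n5,n6,m1,m2,m3,m4]), prod_singleton,
    prod_insert (by simp [huv,hur,hus,hvr,hvs,hrs,hgu,hgv,hgr,hgs,n1,n2,n3,n4,n5,n6,m1,m2,m3,m4]), prod_insert (by simp [huv,hur,hus,hvr,hvs,hrs,hgu,hgv,hgr,hgs,n1,n2,n3,n4,n5,n6,m1,m2,m3,m4]), prod_singleton,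
    prod_insert (by simp [huv,hur,hus,hvr,hvs,hrs,hgu,hgv,hgr,hgs,n1,n2,n3,n4,n5,n6,m1,m2,m3,m4]), prod_insert (by simp [huv,hur,hus,hvr,hvs,hrs,hgu,hgv,hgr,hgs,n1,n2,n3,n4,n5,n6,m1,m2,m3,m4]), prod_singleton,
    prod_insert (by simp [huv,hur,hus,hvr,hvs,hrs,hgu,hgv,hgr,hgs,n1,n2,n3,n4,n5,n6,m1,m2,m3,m4]), prod_insert (by simp [huv,hur,hus,hvr,hvs,hrs,hgu,hgv,hgr,hgs,n1,n2,n3,n4,n5,n6,m1,m2,m3,m4]), prod_singleton]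
  ring

lemma sumB (y : ι → ℝ)
    (huv : u ≠ v) (hur : u ≠ r) (hus : u ≠ s) (hvr : v ≠ r) (hvs : v ≠ s) (hrs : r ≠ s)
    (hgu : g ≠ u) (hgv : g ≠ v) (hgr : g ≠ r) (hgs : g ≠ s) :
    ∑ e ∈ quadB g u v r s, ∏ i ∈ e, y i = y g * ((y u + y v) * (y r + y s)) := by
  have n1 := Ne.symm huv; have n2 := Ne.symm hur; have n3 := Ne.symm hus
  have n4 := Ne.symm hvr; have n5 := Ne.symm hvs; have n6 := Ne.symm hrs
  have m1 := Ne.symm hgu; have m2 := Ne.symm hgv; have m3 := Ne.symm hgr; have m4 := Ne.symm hgs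
  unfold quadB
  rw [sum_insert (by simp only [mem_insert, mem_singleton, not_or]; exact ⟨tripleNe r (by simp) (by simp [huv,hur,hus,hvr,hvs,hrs,hgu,hgv,hgr,hgs,n1,n2,n3,n4,n5,n6,m1,m2,m3,m4]), tripleNe u (by simp) (by simp [huv,hur,hus,hvr,hvs,hrs,hgu,hgv,hgr,hgs,n1,n2,n3,n4,n5,n6,m1,m2,m3,m4]), tripleNe u (by simp) (by simp [huv,hur,hus,hvr,hvs,hrs,hgu,hgv,hgr,hgs,n1,n2,n3,n4,n5,n6,m1,m2,m3,m4])⟩),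
    sum_insert (by simp only [mem_insert, mem_singleton, not_or]; exact ⟨tripleNe u (by simp) (by simp [huv,hur,hus,hvr,hvs,hrs,hgu,hgv,hgr,hgs,n1,n2,n3,n4,n5,n6,m1,m2,m3,m4]), tripleNe u (by simp) (by simp [huv,hur,hus,hvr,hvs,hrs,hgu,hgv,hgr,hgs,n1,n2,n3,n4,n5,n6,m1,m2,m3,m4])⟩),
    sum_insert (by simp only [mem_singleton]; exact tripleNe r (by simp) (by simp [huv,hur,hus,hvr,hvs,hrs,hgu,hgv,hgr,hgs,n1,n2,n3,n4,n5,n6,m1,m2,m3,m4])),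
    sum_singleton]
  rw [prod_insert (by simp [huv,hur,hus,hvr,hvs,hrs,hgu,hgv,hgr,hgs,n1,n2,n3,n4,n5,n6,m1,m2,m3,m4]), prod_insert (by simp [huv,hur,hus,hvr,hvs,hrs,hgu,hgv,hgr,hgs,n1,n2,n3,n4,n5,n6,m1,m2,m3,m4]), prod_singleton,
    prod_insert (by simp [huv,hur,hus,hvr,hvs,hrs,hgu,hgv,hgr,hgs,n1,n2,n3,n4,n5,n6,m1,m2,m3,m4]), prod_insert (by simp [huv,hur,hus,hvr,hvs,hrs,hgu,hgv,hgr,hgs,n1,n2,n3,n4,n5,n6,m1,m2,m3,m4]), prod_singleton,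
    prod_insert (by simp [huv,hur,hus,hvr,hvs,hrs,hgu,hgv,hgr,hgs,n1,n2,n3,n4,n5,n6,m1,m2,m3,m4]), prod_insert (by simp [huv,hur,hus,hvr,hvs,hrs,hgu,hgv,hgr,hgs,n1,n2,n3,n4,n5,n6,m1,m2,m3,m4]), prod_singleton,
    prod_insert (by simp [huv,hur,hus,hvr,hvs,hrs,hgu,hgv,hgr,hgs,n1,n2,n3,n4,n5,n6,m1,m2,m3,m4]), prod_insert (by simp [huv,hur,hus,hvr,hvs,hrs,hgu,hgv,hgr,hgs,n1,n2,n3,n4,n5,n6,m1,m2,m3,m4]), prod_singleton]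
  ring

lemma sumC (y : ι → ℝ)
    (huv : u ≠ v) (hur : u ≠ r) (hus : u ≠ s) (hvr : v ≠ r) (hvs : v ≠ s) (hrs : r ≠ s)
    (hgu : g ≠ u) (hgv : g ≠ v) (hgr : g ≠ r) (hgs : g ≠ s) :
    ∑ e ∈ quadC g u v r s, ∏ i ∈ e, y i = y g * ((y u + y s) * (y r + y v)) := by
  have n1 := Ne.symm huv; have n2 := Ne.symm hur; have n3 := Ne.symm hus
  have n4 := Ne.symm hvr; have n5 := Ne.symm hvs; have n6 := Ne.symm hrs
  have m1 := Ne.symm hgu; have m2 := Ne.symm hgv; have m3 := Ne.symm hgr; have m4 := Ne.symm hgs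
  unfold quadC
  rw [sum_insert (by simp only [mem_insert, mem_singleton, not_or]; exact ⟨tripleNe r (by simp) (by simp [huv,hur,hus,hvr,hvs,hrs,hgu,hgv,hgr,hgs,n1,n2,n3,n4,n5,n6,m1,m2,m3,m4]), tripleNe u (by simp) (by simp [huv,hur,hus,hvr,hvs,hrs,hgu,hgv,hgr,hgs,n1,n2,n3,n4,n5,n6,m1,m2,m3,m4]), tripleNe u (by simp) (by simp [huv,hur,hus,hvr,hvs,hrs,hgu,hgv,hgr,hgs,n1,n2,n3,n4,n5,n6,m1,m2,m3,m4])⟩),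
    sum_insert (by simp only [mem_insert, mem_singleton, not_or]; exact ⟨tripleNe u (by simp) (by simp [huv,hur,hus,hvr,hvs,hrs,hgu,hgv,hgr,hgs,n1,n2,n3,n4,n5,n6,m1,m2,m3,m4]), tripleNe u (by simp) (by simp [huv,hur,hus,hvr,hvs,hrs,hgu,hgv,hgr,hgs,n1,n2,n3,n4,n5,n6,m1,m2,m3,m4])⟩),
    sum_insert (by simp only [mem_singleton]; exact tripleNe r (by simp) (by simp [huv,hur,hus,hvr,hvs,hrs,hgu,hgv,hgr,hgs,n1,n2,n3,n4,n5,n6,m1,m2,m3,m4])),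
    sum_singleton]
  rw [prod_insert (by simp [huv,hur,hus,hvr,hvs,hrs,hgu,hgv,hgr,hgs,n1,n2,n3,n4,n5,n6,m1,m2,m3,m4]), prod_insert (by simp [huv,hur,hus,hvr,hvs,hrs,hgu,hgv,hgr,hgs,n1,n2,n3,n4,n5,n6,m1,m2,m3,m4]), prod_singleton,
    prod_insert (by simp [huv,hur,hus,hvr,hvs,hrs,hgu,hgv,hgr,hgs,n1,n2,n3,n4,n5,n6,m1,m2,m3,m4]), prod_insert (by simp [huv,hur,hus,hvr,hvs,hrs,hgu,hgv,hgr,hgs,n1,n2,n3,n4,n5,n6,m1,m2,m3,m4]), prod_singleton,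
    prod_insert (by simp [huv,hur,hus,hvr,hvs,hrs,hgu,hgv,hgr,hgs,n1,n2,n3,n4,n5,n6,m1,m2,m3,m4]), prod_insert (by simp [huv,hur,hus,hvr,hvs,hrs,hgu,hgv,hgr,hgs,n1,n2,n3,n4,n5,n6,m1,m2,m3,m4]), prod_singleton,
    prod_insert (by simp [huv,hur,hus,hvr,hvs,hrs,hgu,hgv,hgr,hgs,n1,n2,n3,n4,n5,n6,m1,m2,m3,m4]), prod_insert (by simp [huv,hur,hus,hvr,hvs,hrs,hgu,hgv,hgr,hgs,n1,n2,n3,n4,n5,n6,m1,m2,m3,m4]), prod_singleton]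
  ring

end quadsum


section quadpair
variable {ι : Type*} [DecidableEq ι]
variable {u v r s g g' : ι}



set_option maxHeartbeats 1000000 in
lemma quadPairAA
    (huv : u ≠ v) (hur : u ≠ r) (hus : u ≠ s) (hvr : v ≠ r) (hvs : v ≠ s) (hrs : r ≠ s)
    (hgu : g ≠ u) (hgv : g ≠ v) (hgr : g ≠ r) (hgs : g ≠ s)
    (hgu' : g' ≠ u) (hgv' : g' ≠ v) (hgr' : g' ≠ r) (hgs' : g' ≠ s)
    {e : Finset ι} (he : e ∈ quadA g u v r s) (he' : e ∈ quadA g' u v r s) : g = g' := by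
  have n1 := Ne.symm huv; have n2 := Ne.symm hur; have n3 := Ne.symm hus
  have n4 := Ne.symm hvr; have n5 := Ne.symm hvs; have n6 := Ne.symm hrs
  have m1 := Ne.symm hgu; have m2 := Ne.symm hgv; have m3 := Ne.symm hgr; have m4 := Ne.symm hgs
  have m5 := Ne.symm hgu'; have m6 := Ne.symm hgv'; have m7 := Ne.symm hgr'; have m8 := Ne.symm hgs'
  simp only [quadA, quadA, mem_insert, mem_singleton] at he he'
  rcases he with h|h|h|h <;> rcases he' with h'|h'|h'|h' <;>
  · have heq := h.symm.trans h'
    have key := Finset.ext_iff.mp heq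
    have k1 := key u; have k2 := key v; have k3 := key r; have k4 := key s
    have k5 := key g; have k6 := key g'
    simp only [mem_insert, mem_singleton, huv, hur, hus, hvr, hvs, hrs,
      hgu, hgv, hgr, hgs, hgu', hgv', hgr', hgs',
      n1, n2, n3, n4, n5, n6, m1, m2, m3, m4, m5, m6, m7, m8,
      ne_eq, not_false_eq_true, false_or, or_false, true_or, iff_true,
      true_iff, false_iff, iff_false, not_or] at k1 k2 k3 k4 k5 k6
    all_goals tauto







set_option maxHeartbeats 1000000 in
lemma quadPairBB
    (huv : u ≠ v) (hur : u ≠ r) (hus : u ≠ s) (hvr : v ≠ r) (hvs : v ≠ s) (hrs : r ≠ s)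
    (hgu : g ≠ u) (hgv : g ≠ v) (hgr : g ≠ r) (hgs : g ≠ s)
    (hgu' : g' ≠ u) (hgv' : g' ≠ v) (hgr' : g' ≠ r) (hgs' : g' ≠ s)
    {e : Finset ι} (he : e ∈ quadB g u v r s) (he' : e ∈ quadB g' u v r s) : g = g' := by
  have n1 := Ne.symm huv; have n2 := Ne.symm hur; have n3 := Ne.symm hus
  have n4 := Ne.symm hvr; have n5 := Ne.symm hvs; have n6 := Ne.symm hrs
  have m1 := Ne.symm hgu; have m2 := Ne.symm hgv; have m3 := Ne.symm hgr; have m4 := Ne.symm hgs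
  have m5 := Ne.symm hgu'; have m6 := Ne.symm hgv'; have m7 := Ne.symm hgr'; have m8 := Ne.symm hgs'
  simp only [quadB, quadB, mem_insert, mem_singleton] at he he'
  rcases he with h|h|h|h <;> rcases he' with h'|h'|h'|h' <;>
  · have heq := h.symm.trans h'
    have key := Finset.ext_iff.mp heq
    have k1 := key u; have k2 := key v; have k3 := key r; have k4 := key s
    have k5 := key g; have k6 := key g'
    simp only [mem_insert, mem_singleton, huv, hur, hus, hvr, hvs, hrs,
      hgu, hgv, hgr, hgs, hgu', hgv', hgr', hgs',
      n1, n2, n3, n4, n5, n6, m1, m2, m3, m4, m5, m6, m7, m8,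
      ne_eq, not_false_eq_true, false_or, or_false, true_or, iff_true,
      true_iff, false_iff, iff_false, not_or] at k1 k2 k3 k4 k5 k6
    all_goals tauto







set_option maxHeartbeats 1000000 in
lemma quadPairCC
    (huv : u ≠ v) (hur : u ≠ r) (hus : u ≠ s) (hvr : v ≠ r) (hvs : v ≠ s) (hrs : r ≠ s)
    (hgu : g ≠ u) (hgv : g ≠ v) (hgr : g ≠ r) (hgs : g ≠ s)
    (hgu' : g' ≠ u) (hgv' : g' ≠ v) (hgr' : g' ≠ r) (hgs' : g' ≠ s)
    {e : Finset ι} (he : e ∈ quadC g u v r s) (he' : e ∈ quadC g' u v r s) : g = g' := by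
  have n1 := Ne.symm huv; have n2 := Ne.symm hur; have n3 := Ne.symm hus
  have n4 := Ne.symm hvr; have n5 := Ne.symm hvs; have n6 := Ne.symm hrs
  have m1 := Ne.symm hgu; have m2 := Ne.symm hgv; have m3 := Ne.symm hgr; have m4 := Ne.symm hgs
  have m5 := Ne.symm hgu'; have m6 := Ne.symm hgv'; have m7 := Ne.symm hgr'; have m8 := Ne.symm hgs'
  simp only [quadC, quadC, mem_insert, mem_singleton] at he he'
  rcases he with h|h|h|h <;> rcases he' with h'|h'|h'|h' <;>
  · have heq := h.symm.trans h'
    have key := Finset.ext_iff.mp heq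
    have k1 := key u; have k2 := key v; have k3 := key r; have k4 := key s
    have k5 := key g; have k6 := key g'
    simp only [mem_insert, mem_singleton, huv, hur, hus, hvr, hvs, hrs,
      hgu, hgv, hgr, hgs, hgu', hgv', hgr', hgs',
      n1, n2, n3, n4, n5, n6, m1, m2, m3, m4, m5, m6, m7, m8,
      ne_eq, not_false_eq_true, false_or, or_false, true_or, iff_true,
      true_iff, false_iff, iff_false, not_or] at k1 k2 k3 k4 k5 k6
    all_goals tauto







set_option maxHeartbeats 1000000 in
lemma quadPairAB
    (huv : u ≠ v) (hur : u ≠ r) (hus : u ≠ s) (hvr : v ≠ r) (hvs : v ≠ s) (hrs : r ≠ s)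
    (hgu : g ≠ u) (hgv : g ≠ v) (hgr : g ≠ r) (hgs : g ≠ s)
    (hgu' : g' ≠ u) (hgv' : g' ≠ v) (hgr' : g' ≠ r) (hgs' : g' ≠ s)
    {e : Finset ι} (he : e ∈ quadA g u v r s) (he' : e ∈ quadB g' u v r s) : g = g' := by
  have n1 := Ne.symm huv; have n2 := Ne.symm hur; have n3 := Ne.symm hus
  have n4 := Ne.symm hvr; have n5 := Ne.symm hvs; have n6 := Ne.symm hrs
  have m1 := Ne.symm hgu; have m2 := Ne.symm hgv; have m3 := Ne.symm hgr; have m4 := Ne.symm hgs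
  have m5 := Ne.symm hgu'; have m6 := Ne.symm hgv'; have m7 := Ne.symm hgr'; have m8 := Ne.symm hgs'
  simp only [quadA, quadB, mem_insert, mem_singleton] at he he'
  rcases he with h|h|h|h <;> rcases he' with h'|h'|h'|h' <;>
  · have heq := h.symm.trans h'
    have key := Finset.ext_iff.mp heq
    have k1 := key u; have k2 := key v; have k3 := key r; have k4 := key s
    have k5 := key g; have k6 := key g'
    simp only [mem_insert, mem_singleton, huv, hur, hus, hvr, hvs, hrs,
      hgu, hgv, hgr, hgs, hgu', hgv', hgr', hgs',
      n1, n2, n3, n4, n5, n6, m1, m2, m3, m4, m5, m6, m7, m8,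
      ne_eq, not_false_eq_true, false_or, or_false, true_or, iff_true,
      true_iff, false_iff, iff_false, not_or] at k1 k2 k3 k4 k5 k6
    all_goals tauto







set_option maxHeartbeats 1000000 in
lemma quadPairAC
    (huv : u ≠ v) (hur : u ≠ r) (hus : u ≠ s) (hvr : v ≠ r) (hvs : v ≠ s) (hrs : r ≠ s)
    (hgu : g ≠ u) (hgv : g ≠ v) (hgr : g ≠ r) (hgs : g ≠ s)
    (hgu' : g' ≠ u) (hgv' : g' ≠ v) (hgr' : g' ≠ r) (hgs' : g' ≠ s)
    {e : Finset ι} (he : e ∈ quadA g u v r s) (he' : e ∈ quadC g' u v r s) : g = g' := by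
  have n1 := Ne.symm huv; have n2 := Ne.symm hur; have n3 := Ne.symm hus
  have n4 := Ne.symm hvr; have n5 := Ne.symm hvs; have n6 := Ne.symm hrs
  have m1 := Ne.symm hgu; have m2 := Ne.symm hgv; have m3 := Ne.symm hgr; have m4 := Ne.symm hgs
  have m5 := Ne.symm hgu'; have m6 := Ne.symm hgv'; have m7 := Ne.symm hgr'; have m8 := Ne.symm hgs'
  simp only [quadA, quadC, mem_insert, mem_singleton] at he he'
  rcases he with h|h|h|h <;> rcases he' with h'|h'|h'|h' <;>
  · have heq := h.symm.trans h'
    have key := Finset.ext_iff.mp heq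
    have k1 := key u; have k2 := key v; have k3 := key r; have k4 := key s
    have k5 := key g; have k6 := key g'
    simp only [mem_insert, mem_singleton, huv, hur, hus, hvr, hvs, hrs,
      hgu, hgv, hgr, hgs, hgu', hgv', hgr', hgs',
      n1, n2, n3, n4, n5, n6, m1, m2, m3, m4, m5, m6, m7, m8,
      ne_eq, not_false_eq_true, false_or, or_false, true_or, iff_true,
      true_iff, false_iff, iff_false, not_or] at k1 k2 k3 k4 k5 k6
    all_goals tauto







set_option maxHeartbeats 1000000 in
lemma quadPairBC
    (huv : u ≠ v) (hur : u ≠ r) (hus : u ≠ s) (hvr : v ≠ r) (hvs : v ≠ s) (hrs : r ≠ s)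
    (hgu : g ≠ u) (hgv : g ≠ v) (hgr : g ≠ r) (hgs : g ≠ s)
    (hgu' : g' ≠ u) (hgv' : g' ≠ v) (hgr' : g' ≠ r) (hgs' : g' ≠ s)
    {e : Finset ι} (he : e ∈ quadB g u v r s) (he' : e ∈ quadC g' u v r s) : g = g' := by
  have n1 := Ne.symm huv; have n2 := Ne.symm hur; have n3 := Ne.symm hus
  have n4 := Ne.symm hvr; have n5 := Ne.symm hvs; have n6 := Ne.symm hrs
  have m1 := Ne.symm hgu; have m2 := Ne.symm hgv; have m3 := Ne.symm hgr; have m4 := Ne.symm hgs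
  have m5 := Ne.symm hgu'; have m6 := Ne.symm hgv'; have m7 := Ne.symm hgr'; have m8 := Ne.symm hgs'
  simp only [quadB, quadC, mem_insert, mem_singleton] at he he'
  rcases he with h|h|h|h <;> rcases he' with h'|h'|h'|h' <;>
  · have heq := h.symm.trans h'
    have key := Finset.ext_iff.mp heq
    have k1 := key u; have k2 := key v; have k3 := key r; have k4 := key s
    have k5 := key g; have k6 := key g'
    simp only [mem_insert, mem_singleton, huv, hur, hus, hvr, hvs, hrs,
      hgu, hgv, hgr, hgs, hgu', hgv', hgr', hgs',
      n1, n2, n3, n4, n5, n6, m1, m2, m3, m4, m5, m6, m7, m8,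
      ne_eq, not_false_eq_true, false_or, or_false, true_or, iff_true,
      true_iff, false_iff, iff_false, not_or] at k1 k2 k3 k4 k5 k6
    all_goals tauto

lemma quadA_shape {e : Finset ι} (he : e ∈ quadA g u v r s) :
    (u ∈ e ∨ r ∈ e) ∧ (v ∈ e ∨ s ∈ e) := by
  simp only [quadA, mem_insert, mem_singleton] at he
  rcases he with h|h|h|h <;> subst h <;> simp

lemma quadB_shape {e : Finset ι} (he : e ∈ quadB g u v r s) :
    (u ∈ e ∨ v ∈ e) ∧ (r ∈ e ∨ s ∈ e) := by
  simp only [quadB, mem_insert, mem_singleton] at he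
  rcases he with h|h|h|h <;> subst h <;> simp

lemma quadC_shape {e : Finset ι} (he : e ∈ quadC g u v r s) :
    (u ∈ e ∨ s ∈ e) ∧ (r ∈ e ∨ v ∈ e) := by
  simp only [quadC, mem_insert, mem_singleton] at he
  rcases he with h|h|h|h <;> subst h <;> simp

end quadpair


section Gmore
open Sum
variable {m : ℕ} (G : Finset (Finset (Fin m))) (v₁ v₂ : Fin m)

lemma sum_both (hG3 : ∀ E ∈ G, E.card = 3) (hne : v₁ ≠ v₂) (x : Fin m → ℝ) :
    ∑ E ∈ G.filter (fun E => v₁ ∈ E ∧ v₂ ∈ E), ∏ i ∈ E, x i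
      = x v₁ * x v₂ * ∑ w ∈ coNbhd G v₁ v₂, x w := by
  rw [both_eq G v₁ v₂ hG3 hne, sum_image, mul_sum]
  · refine sum_congr rfl fun w hw => ?_
    obtain ⟨hw1, hw2⟩ := coNbhd_ne G v₁ v₂ hG3 hw
    rw [show ({w, v₁, v₂} : Finset (Fin m)) = insert w {v₁, v₂} from rfl,
      prod_insert (by simp [hw1, hw2]), prod_insert (by simp [hne]), prod_singleton]
    ring
  · intro w hw w' hw' h
    obtain ⟨hw1, hw2⟩ := coNbhd_ne G v₁ v₂ hG3 hw
    have : w ∈ ({w', v₁, v₂} : Finset (Fin m)) := by dsimp only at h; rw [← h]; simp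
    simp only [mem_insert, mem_singleton] at this
    tauto

lemma sum_notboth (hG3 : ∀ E ∈ G, E.card = 3) (hne : v₁ ≠ v₂) (x : Fin m → ℝ) :
    ∑ E ∈ G.filter (fun E => ¬ (v₁ ∈ E ∧ v₂ ∈ E)), ∏ i ∈ E, x i
      = S0 G v₁ v₂ x + x v₁ * S1 G v₁ v₂ x + x v₂ * S2 G v₁ v₂ x := by
  have h1 := sum_filter_add_sum_filter_not G (fun E => v₁ ∈ E ∧ v₂ ∈ E) (fun E => ∏ i ∈ E, x i)
  have h2 := sum_both G v₁ v₂ hG3 hne x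
  have h3 := lagPoly_decomp G v₁ v₂ hG3 hne x
  unfold lagPoly at h3
  linarith

lemma S0_congr {x x' : Fin m → ℝ} (h : ∀ w, w ≠ v₁ → w ≠ v₂ → x w = x' w) :
    S0 G v₁ v₂ x = S0 G v₁ v₂ x' := by
  unfold S0
  refine sum_congr rfl fun E hE => prod_congr rfl fun i hi => ?_
  rw [mem_filter] at hE
  exact h i (fun hh => hE.2.1 (hh ▸ hi)) (fun hh => hE.2.2 (hh ▸ hi))

lemma S1_congr {x x' : Fin m → ℝ} (h : ∀ w, w ≠ v₁ → w ≠ v₂ → x w = x' w) :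
    S1 G v₁ v₂ x = S1 G v₁ v₂ x' := by
  unfold S1
  refine sum_congr rfl fun E hE => prod_congr rfl fun i hi => ?_
  rw [mem_filter] at hE
  rw [mem_erase] at hi
  exact h i hi.1 (fun hh => hE.2.2 (hh ▸ hi.2))

lemma S2_congr {x x' : Fin m → ℝ} (h : ∀ w, w ≠ v₁ → w ≠ v₂ → x w = x' w) :
    S2 G v₁ v₂ x = S2 G v₁ v₂ x' := by
  unfold S2
  refine sum_congr rfl fun E hE => prod_congr rfl fun i hi => ?_
  rw [mem_filter] at hE
  rw [mem_erase] at hi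
  exact h i (fun hh => hE.2.1 (hh ▸ hi.2)) hi.1

lemma coNbhd_sum_congr (hG3 : ∀ E ∈ G, E.card = 3) {x x' : Fin m → ℝ}
    (h : ∀ w, w ≠ v₁ → w ≠ v₂ → x w = x' w) :
    ∑ w ∈ coNbhd G v₁ v₂, x w = ∑ w ∈ coNbhd G v₁ v₂, x' w := by
  refine sum_congr rfl fun w hw => ?_
  obtain ⟨h1, h2⟩ := coNbhd_ne G v₁ v₂ hG3 hw
  exact h w h1 h2

end Gmore

section Blowup
open Sum
variable {m : ℕ} (G : Finset (Finset (Fin m))) (v₁ v₂ : Fin m)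

set_option maxHeartbeats 1000000 in
lemma blowup_decomp (hG3 : ∀ E ∈ G, E.card = 3) (hne : v₁ ≠ v₂)
    (A B C : Finset (Fin m)) (hAB : Disjoint A B) (hAC : Disjoint A C) (hBC : Disjoint B C)
    (hAv : ∀ w ∈ A, w ≠ v₁ ∧ w ≠ v₂) (hBv : ∀ w ∈ B, w ≠ v₁ ∧ w ≠ v₂)
    (hCv : ∀ w ∈ C, w ≠ v₁ ∧ w ≠ v₂) (y : Fin m ⊕ Fin 2 → ℝ) :
    lagPoly (mixBlowup G v₁ v₂ A B C) y =
      S0 G v₁ v₂ (fun i => y (Sum.inl i))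
      + (y (Sum.inl v₁) + y (Sum.inr 0)) * S1 G v₁ v₂ (fun i => y (Sum.inl i))
      + (y (Sum.inl v₂) + y (Sum.inr 1)) * S2 G v₁ v₂ (fun i => y (Sum.inl i))
      + (∑ w ∈ A, y (Sum.inl w)) *
          ((y (Sum.inl v₁) + y (Sum.inr 0)) * (y (Sum.inl v₂) + y (Sum.inr 1)))
      + (∑ w ∈ B, y (Sum.inl w)) *
          ((y (Sum.inl v₁) + y (Sum.inl v₂)) * (y (Sum.inr 0) + y (Sum.inr 1)))
      + (∑ w ∈ C, y (Sum.inl w)) *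
          ((y (Sum.inl v₁) + y (Sum.inr 1)) * (y (Sum.inr 0) + y (Sum.inl v₂))) := by
  classical
  have huv : (Sum.inl v₁ : Fin m ⊕ Fin 2) ≠ Sum.inl v₂ := by simp [hne]
  have hur : (Sum.inl v₁ : Fin m ⊕ Fin 2) ≠ Sum.inr 0 := by simp
  have hus : (Sum.inl v₁ : Fin m ⊕ Fin 2) ≠ Sum.inr 1 := by simp
  have hvr : (Sum.inl v₂ : Fin m ⊕ Fin 2) ≠ Sum.inr 0 := by simp
  have hvs : (Sum.inl v₂ : Fin m ⊕ Fin 2) ≠ Sum.inr 1 := by simp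
  have hrs : (Sum.inr 0 : Fin m ⊕ Fin 2) ≠ Sum.inr 1 := by simp
  have hgA : ∀ w ∈ A, (Sum.inl w : Fin m ⊕ Fin 2) ≠ Sum.inl v₁ ∧
      (Sum.inl w : Fin m ⊕ Fin 2) ≠ Sum.inl v₂ ∧ (Sum.inl w : Fin m ⊕ Fin 2) ≠ Sum.inr 0 ∧
      (Sum.inl w : Fin m ⊕ Fin 2) ≠ Sum.inr 1 := by
    intro w hw; exact ⟨by simp [(hAv w hw).1], by simp [(hAv w hw).2], by simp, by simp⟩
  have hgB : ∀ w ∈ B, (Sum.inl w : Fin m ⊕ Fin 2) ≠ Sum.inl v₁ ∧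
      (Sum.inl w : Fin m ⊕ Fin 2) ≠ Sum.inl v₂ ∧ (Sum.inl w : Fin m ⊕ Fin 2) ≠ Sum.inr 0 ∧
      (Sum.inl w : Fin m ⊕ Fin 2) ≠ Sum.inr 1 := by
    intro w hw; exact ⟨by simp [(hBv w hw).1], by simp [(hBv w hw).2], by simp, by simp⟩
  have hgC : ∀ w ∈ C, (Sum.inl w : Fin m ⊕ Fin 2) ≠ Sum.inl v₁ ∧
      (Sum.inl w : Fin m ⊕ Fin 2) ≠ Sum.inl v₂ ∧ (Sum.inl w : Fin m ⊕ Fin 2) ≠ Sum.inr 0 ∧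
      (Sum.inl w : Fin m ⊕ Fin 2) ≠ Sum.inr 1 := by
    intro w hw; exact ⟨by simp [(hCv w hw).1], by simp [(hCv w hw).2], by simp, by simp⟩
  -- the six parts
  set P1 : Finset (Finset (Fin m ⊕ Fin 2)) :=
    (G.filter (fun E => ¬ (v₁ ∈ E ∧ v₂ ∈ E))).image (Finset.image Sum.inl) with hP1def
  set P2 : Finset (Finset (Fin m ⊕ Fin 2)) :=
    (G.filter (fun E => v₁ ∈ E ∧ v₂ ∉ E)).image
      (fun E => insert (Sum.inr 0) ((E.erase v₁).image Sum.inl)) with hP2def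
  set P3 : Finset (Finset (Fin m ⊕ Fin 2)) :=
    (G.filter (fun E => v₂ ∈ E ∧ v₁ ∉ E)).image
      (fun E => insert (Sum.inr 1) ((E.erase v₂).image Sum.inl)) with hP3def
  set P4 : Finset (Finset (Fin m ⊕ Fin 2)) :=
    A.biUnion (fun w => quadA (Sum.inl w) (Sum.inl v₁) (Sum.inl v₂) (Sum.inr 0) (Sum.inr 1))
    with hP4def
  set P5 : Finset (Finset (Fin m ⊕ Fin 2)) :=
    B.biUnion (fun w => quadB (Sum.inl w) (Sum.inl v₁) (Sum.inl v₂) (Sum.inr 0) (Sum.inr 1))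
    with hP5def
  set P6 : Finset (Finset (Fin m ⊕ Fin 2)) :=
    C.biUnion (fun w => quadC (Sum.inl w) (Sum.inl v₁) (Sum.inl v₂) (Sum.inr 0) (Sum.inr 1))
    with hP6def
  have hform : mixBlowup G v₁ v₂ A B C = P1 ∪ P2 ∪ P3 ∪ P4 ∪ P5 ∪ P6 := rfl
  -- shape facts
  have hP1 : ∀ e ∈ P1, (Sum.inr 0 : Fin m ⊕ Fin 2) ∉ e ∧ (Sum.inr 1 : Fin m ⊕ Fin 2) ∉ e ∧
      ¬ (Sum.inl v₁ ∈ e ∧ Sum.inl v₂ ∈ e) := by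
    intro e he
    rw [hP1def, mem_image] at he
    obtain ⟨E, hE, rfl⟩ := he
    rw [mem_filter] at hE
    refine ⟨by simp, by simp, ?_⟩
    simpa using hE.2
  have hP2 : ∀ e ∈ P2, (Sum.inr 0 : Fin m ⊕ Fin 2) ∈ e ∧ (Sum.inr 1 : Fin m ⊕ Fin 2) ∉ e ∧
      Sum.inl v₁ ∉ e ∧ Sum.inl v₂ ∉ e := by
    intro e he
    rw [hP2def, mem_image] at he
    obtain ⟨E, hE, rfl⟩ := he
    rw [mem_filter] at hE
    refine ⟨by simp, by simp, ?_, ?_⟩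
    · simp only [mem_insert, mem_image]
      push_neg
      exact ⟨hur, fun a ha hh => (mem_erase.mp ha).1 (inl_injective hh)⟩
    · simp only [mem_insert, mem_image]
      push_neg
      exact ⟨hvr, fun a ha hh =>
        hE.2.2 ((inl_injective hh) ▸ mem_of_mem_erase ha)⟩
  have hP3 : ∀ e ∈ P3, (Sum.inr 1 : Fin m ⊕ Fin 2) ∈ e ∧ (Sum.inr 0 : Fin m ⊕ Fin 2) ∉ e ∧
      Sum.inl v₁ ∉ e ∧ Sum.inl v₂ ∉ e := by
    intro e he
    rw [hP3def, mem_image] at he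
    obtain ⟨E, hE, rfl⟩ := he
    rw [mem_filter] at hE
    refine ⟨by simp, by simp, ?_, ?_⟩
    · simp only [mem_insert, mem_image]
      push_neg
      exact ⟨hus, fun a ha hh =>
        hE.2.2 ((inl_injective hh) ▸ mem_of_mem_erase ha)⟩
    · simp only [mem_insert, mem_image]
      push_neg
      exact ⟨hvs, fun a ha hh => (mem_erase.mp ha).1 (inl_injective hh)⟩
  -- disjointness of the six parts
  have hP4' : ∀ e ∈ P4, ∃ w ∈ A,
      e ∈ quadA (Sum.inl w) (Sum.inl v₁) (Sum.inl v₂) (Sum.inr 0) (Sum.inr 1) := by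
    intro e he; rw [hP4def, mem_biUnion] at he; exact he
  have hP5' : ∀ e ∈ P5, ∃ w ∈ B,
      e ∈ quadB (Sum.inl w) (Sum.inl v₁) (Sum.inl v₂) (Sum.inr 0) (Sum.inr 1) := by
    intro e he; rw [hP5def, mem_biUnion] at he; exact he
  have hP6' : ∀ e ∈ P6, ∃ w ∈ C,
      e ∈ quadC (Sum.inl w) (Sum.inl v₁) (Sum.inl v₂) (Sum.inr 0) (Sum.inr 1) := by
    intro e he; rw [hP6def, mem_biUnion] at he; exact he
  have d12 : Disjoint P1 P2 := disjoint_left.mpr fun e h1 h2 => by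
    have a := hP1 e h1; have b := hP2 e h2; tauto
  have d13 : Disjoint P1 P3 := disjoint_left.mpr fun e h1 h2 => by
    have a := hP1 e h1; have b := hP3 e h2; tauto
  have d23 : Disjoint P2 P3 := disjoint_left.mpr fun e h1 h2 => by
    have a := hP2 e h1; have b := hP3 e h2; tauto
  have d14 : Disjoint P1 P4 := disjoint_left.mpr fun e h1 h2 => by
    have a := hP1 e h1
    obtain ⟨w, hw, he⟩ := hP4' e h2
    have b := quadA_shape he; tauto
  have d15 : Disjoint P1 P5 := disjoint_left.mpr fun e h1 h2 => by
    have a := hP1 e h1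
    obtain ⟨w, hw, he⟩ := hP5' e h2
    have b := quadB_shape he; tauto
  have d16 : Disjoint P1 P6 := disjoint_left.mpr fun e h1 h2 => by
    have a := hP1 e h1
    obtain ⟨w, hw, he⟩ := hP6' e h2
    have b := quadC_shape he; tauto
  have d24 : Disjoint P2 P4 := disjoint_left.mpr fun e h1 h2 => by
    have a := hP2 e h1
    obtain ⟨w, hw, he⟩ := hP4' e h2
    have b := quadA_shape he; tauto
  have d25 : Disjoint P2 P5 := disjoint_left.mpr fun e h1 h2 => by
    have a := hP2 e h1
    obtain ⟨w, hw, he⟩ := hP5' e h2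
    have b := quadB_shape he; tauto
  have d26 : Disjoint P2 P6 := disjoint_left.mpr fun e h1 h2 => by
    have a := hP2 e h1
    obtain ⟨w, hw, he⟩ := hP6' e h2
    have b := quadC_shape he; tauto
  have d34 : Disjoint P3 P4 := disjoint_left.mpr fun e h1 h2 => by
    have a := hP3 e h1
    obtain ⟨w, hw, he⟩ := hP4' e h2
    have b := quadA_shape he; tauto
  have d35 : Disjoint P3 P5 := disjoint_left.mpr fun e h1 h2 => by
    have a := hP3 e h1
    obtain ⟨w, hw, he⟩ := hP5' e h2
    have b := quadB_shape he; tauto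
  have d36 : Disjoint P3 P6 := disjoint_left.mpr fun e h1 h2 => by
    have a := hP3 e h1
    obtain ⟨w, hw, he⟩ := hP6' e h2
    have b := quadC_shape he; tauto
  have d45 : Disjoint P4 P5 := disjoint_left.mpr fun e h1 h2 => by
    obtain ⟨w, hw, he⟩ := hP4' e h1
    obtain ⟨w', hw', he'⟩ := hP5' e h2
    obtain ⟨g1, g2, g3, g4⟩ := hgA w hw
    obtain ⟨g1', g2', g3', g4'⟩ := hgB w' hw'
    have := quadPairAB huv hur hus hvr hvs hrs g1 g2 g3 g4 g1' g2' g3' g4' he he'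
    exact absurd hw' (disjoint_left.mp hAB ((inl_injective this) ▸ hw))
  have d46 : Disjoint P4 P6 := disjoint_left.mpr fun e h1 h2 => by
    obtain ⟨w, hw, he⟩ := hP4' e h1
    obtain ⟨w', hw', he'⟩ := hP6' e h2
    obtain ⟨g1, g2, g3, g4⟩ := hgA w hw
    obtain ⟨g1', g2', g3', g4'⟩ := hgC w' hw'
    have := quadPairAC huv hur hus hvr hvs hrs g1 g2 g3 g4 g1' g2' g3' g4' he he'
    exact absurd hw' (disjoint_left.mp hAC ((inl_injective this) ▸ hw))
  have d56 : Disjoint P5 P6 := disjoint_left.mpr fun e h1 h2 => by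
    obtain ⟨w, hw, he⟩ := hP5' e h1
    obtain ⟨w', hw', he'⟩ := hP6' e h2
    obtain ⟨g1, g2, g3, g4⟩ := hgB w hw
    obtain ⟨g1', g2', g3', g4'⟩ := hgC w' hw'
    have := quadPairBC huv hur hus hvr hvs hrs g1 g2 g3 g4 g1' g2' g3' g4' he he'
    exact absurd hw' (disjoint_left.mp hBC ((inl_injective this) ▸ hw))
  -- split the sum
  have hsplit : lagPoly (mixBlowup G v₁ v₂ A B C) y =
      (∑ e ∈ P1, ∏ i ∈ e, y i) + (∑ e ∈ P2, ∏ i ∈ e, y i) + (∑ e ∈ P3, ∏ i ∈ e, y i)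
      + (∑ e ∈ P4, ∏ i ∈ e, y i) + (∑ e ∈ P5, ∏ i ∈ e, y i)
      + (∑ e ∈ P6, ∏ i ∈ e, y i) := by
    rw [hform]
    unfold lagPoly
    rw [sum_union (by
        simp only [disjoint_union_left]
        exact ⟨⟨⟨⟨d16, d26⟩, d36⟩, d46⟩, d56⟩),
      sum_union (by
        simp only [disjoint_union_left]
        exact ⟨⟨⟨d15, d25⟩, d35⟩, d45⟩),
      sum_union (by
        simp only [disjoint_union_left]
        exact ⟨⟨d14, d24⟩, d34⟩),
      sum_union (by
        simp only [disjoint_union_left]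
        exact ⟨d13, d23⟩),
      sum_union d12]
  -- value of each part
  have eP1 : (∑ e ∈ P1, ∏ i ∈ e, y i) =
      S0 G v₁ v₂ (fun i => y (Sum.inl i))
      + y (Sum.inl v₁) * S1 G v₁ v₂ (fun i => y (Sum.inl i))
      + y (Sum.inl v₂) * S2 G v₁ v₂ (fun i => y (Sum.inl i)) := by
    rw [hP1def, sum_image (fun E _ E' _ h => Finset.image_injective inl_injective h)]
    rw [show (∑ E ∈ G.filter (fun E => ¬ (v₁ ∈ E ∧ v₂ ∈ E)), ∏ i ∈ E.image Sum.inl, y i)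
        = ∑ E ∈ G.filter (fun E => ¬ (v₁ ∈ E ∧ v₂ ∈ E)), ∏ i ∈ E, y (Sum.inl i) from
      sum_congr rfl fun E _ => prod_image (fun a _ b _ h => inl_injective h)]
    exact sum_notboth G v₁ v₂ hG3 hne _
  have eP2 : (∑ e ∈ P2, ∏ i ∈ e, y i) =
      y (Sum.inr 0) * S1 G v₁ v₂ (fun i => y (Sum.inl i)) := by
    rw [hP2def, sum_image ?hinj]
    case hinj =>
      intro E hE E' hE' h
      rw [mem_coe, mem_filter] at hE hE'
      have h0 : ∀ F : Finset (Fin m), (Sum.inr 0 : Fin m ⊕ Fin 2) ∉ F.image Sum.inl := by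
        intro F; simp
      have h2 := congrArg (fun S => Finset.erase S (Sum.inr 0 : Fin m ⊕ Fin 2)) h
      simp only [erase_insert (h0 (E.erase v₁)), erase_insert (h0 (E'.erase v₁))] at h2
      have h3 := Finset.image_injective inl_injective h2
      have h4 := congrArg (insert v₁) h3
      rwa [insert_erase hE.2.1, insert_erase hE'.2.1] at h4
    unfold S1
    rw [mul_sum]
    refine sum_congr rfl fun E hE => ?_
    rw [prod_insert (by simp), prod_image (fun a _ b _ h => inl_injective h)]
  have eP3 : (∑ e ∈ P3, ∏ i ∈ e, y i) =
      y (Sum.inr 1) * S2 G v₁ v₂ (fun i => y (Sum.inl i)) := by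
    rw [hP3def, sum_image ?hinj]
    case hinj =>
      intro E hE E' hE' h
      rw [mem_coe, mem_filter] at hE hE'
      have h0 : ∀ F : Finset (Fin m), (Sum.inr 1 : Fin m ⊕ Fin 2) ∉ F.image Sum.inl := by
        intro F; simp
      have h2 := congrArg (fun S => Finset.erase S (Sum.inr 1 : Fin m ⊕ Fin 2)) h
      simp only [erase_insert (h0 (E.erase v₂)), erase_insert (h0 (E'.erase v₂))] at h2
      have h3 := Finset.image_injective inl_injective h2
      have h4 := congrArg (insert v₂) h3
      rwa [insert_erase hE.2.1, insert_erase hE'.2.1] at h4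
    unfold S2
    rw [show G.filter (fun E => ¬ v₁ ∈ E ∧ v₂ ∈ E) = G.filter (fun E => v₂ ∈ E ∧ v₁ ∉ E) from
      filter_congr fun E _ => by tauto]
    rw [mul_sum]
    refine sum_congr rfl fun E hE => ?_
    rw [prod_insert (by simp), prod_image (fun a _ b _ h => inl_injective h)]
  have eP4 : (∑ e ∈ P4, ∏ i ∈ e, y i) = (∑ w ∈ A, y (Sum.inl w)) *
      ((y (Sum.inl v₁) + y (Sum.inr 0)) * (y (Sum.inl v₂) + y (Sum.inr 1))) := by
    rw [hP4def, sum_biUnion ?pd]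
    case pd =>
      intro w hw w' hw' hww
      refine disjoint_left.mpr fun e he he' => hww ?_
      obtain ⟨g1, g2, g3, g4⟩ := hgA w hw
      obtain ⟨g1', g2', g3', g4'⟩ := hgA w' hw'
      exact inl_injective (quadPairAA huv hur hus hvr hvs hrs g1 g2 g3 g4 g1' g2' g3' g4' he he')
    rw [sum_mul]
    refine sum_congr rfl fun w hw => ?_
    obtain ⟨g1, g2, g3, g4⟩ := hgA w hw
    exact sumA y huv hur hus hvr hvs hrs g1 g2 g3 g4
  have eP5 : (∑ e ∈ P5, ∏ i ∈ e, y i) = (∑ w ∈ B, y (Sum.inl w)) *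
      ((y (Sum.inl v₁) + y (Sum.inl v₂)) * (y (Sum.inr 0) + y (Sum.inr 1))) := by
    rw [hP5def, sum_biUnion ?pd]
    case pd =>
      intro w hw w' hw' hww
      refine disjoint_left.mpr fun e he he' => hww ?_
      obtain ⟨g1, g2, g3, g4⟩ := hgB w hw
      obtain ⟨g1', g2', g3', g4'⟩ := hgB w' hw'
      exact inl_injective (quadPairBB huv hur hus hvr hvs hrs g1 g2 g3 g4 g1' g2' g3' g4' he he')
    rw [sum_mul]
    refine sum_congr rfl fun w hw => ?_
    obtain ⟨g1, g2, g3, g4⟩ := hgB w hw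
    exact sumB y huv hur hus hvr hvs hrs g1 g2 g3 g4
  have eP6 : (∑ e ∈ P6, ∏ i ∈ e, y i) = (∑ w ∈ C, y (Sum.inl w)) *
      ((y (Sum.inl v₁) + y (Sum.inr 1)) * (y (Sum.inr 0) + y (Sum.inl v₂))) := by
    rw [hP6def, sum_biUnion ?pd]
    case pd =>
      intro w hw w' hw' hww
      refine disjoint_left.mpr fun e he he' => hww ?_
      obtain ⟨g1, g2, g3, g4⟩ := hgC w hw
      obtain ⟨g1', g2', g3', g4'⟩ := hgC w' hw'
      exact inl_injective (quadPairCC huv hur hus hvr hvs hrs g1 g2 g3 g4 g1' g2' g3' g4' he he')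
    rw [sum_mul]
    refine sum_congr rfl fun w hw => ?_
    obtain ⟨g1, g2, g3, g4⟩ := hgC w hw
    exact sumC y huv hur hus hvr hvs hrs g1 g2 g3 g4
  rw [hsplit, eP1, eP2, eP3, eP4, eP5, eP6]
  ring

end Blowup

set_option maxHeartbeats 2000000 in
/-- If `{v₁, v₂}` is a symmetric pair in a 3-graph `G` with codegree `k ≥ a + b + 1`
(`a, b ≥ 1`), then the Lagrangian of the `(a,b)`-mix-crossed blowup of `G` on `{v₁, v₂}`
equals the Lagrangian of `G`. -/
theorem mixBlowup_lagrangian {m : ℕ} (a b : ℕ) (ha : 1 ≤ a) (hb : 1 ≤ b)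
    (G : Finset (Finset (Fin m))) (hG3 : ∀ E ∈ G, E.card = 3)
    (v₁ v₂ : Fin m) (hne : v₁ ≠ v₂)
    (hsym : ∀ S : Finset (Fin m), v₁ ∉ S → v₂ ∉ S → (insert v₁ S ∈ G ↔ insert v₂ S ∈ G))
    (A B C : Finset (Fin m))
    (hAB : Disjoint A B) (hAC : Disjoint A C) (hBC : Disjoint B C)
    (hunion : A ∪ B ∪ C = coNbhd G v₁ v₂)
    (hA : A.card = a) (hB : B.card = b) (hC : C.Nonempty)
    (L L' : ℝ) (hL : IsGreatest (lagValues G) L)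
    (hL' : IsGreatest (lagValues (mixBlowup G v₁ v₂ A B C)) L') :
    L' = L := by
  classical
  obtain ⟨⟨x, hx, hxval⟩, hub⟩ := hL
  obtain ⟨⟨y, hy, hyval⟩, hub'⟩ := hL'
  obtain ⟨hx0, hx1⟩ := hx
  obtain ⟨hy0, hy1⟩ := hy
  have hsubA : ∀ w ∈ A, w ∈ coNbhd G v₁ v₂ := fun w hw =>
    hunion ▸ mem_union_left _ (mem_union_left _ hw)
  have hsubB : ∀ w ∈ B, w ∈ coNbhd G v₁ v₂ := fun w hw =>
    hunion ▸ mem_union_left _ (mem_union_right _ hw)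
  have hsubC : ∀ w ∈ C, w ∈ coNbhd G v₁ v₂ := fun w hw =>
    hunion ▸ mem_union_right _ hw
  have hAv : ∀ w ∈ A, w ≠ v₁ ∧ w ≠ v₂ := fun w hw => coNbhd_ne G v₁ v₂ hG3 (hsubA w hw)
  have hBv : ∀ w ∈ B, w ≠ v₁ ∧ w ≠ v₂ := fun w hw => coNbhd_ne G v₁ v₂ hG3 (hsubB w hw)
  have hCv : ∀ w ∈ C, w ≠ v₁ ∧ w ≠ v₂ := fun w hw => coNbhd_ne G v₁ v₂ hG3 (hsubC w hw)
  have hsigma : ∀ z : Fin m → ℝ, ∑ w ∈ coNbhd G v₁ v₂, z w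
      = (∑ w ∈ A, z w) + (∑ w ∈ B, z w) + (∑ w ∈ C, z w) := by
    intro z
    rw [← hunion, sum_union (disjoint_union_left.mpr ⟨hAC, hBC⟩), sum_union hAB]
  have hsplitsum : ∀ z : Fin m → ℝ,
      ∑ w, z w = z v₁ + z v₂ + ∑ w ∈ (univ.erase v₁).erase v₂, z w := by
    intro z
    rw [← Finset.add_sum_erase _ z (mem_univ v₁),
      ← Finset.add_sum_erase _ z (mem_erase.mpr ⟨Ne.symm hne, mem_univ v₂⟩)]
    ring
  -- Direction 1 : L' ≤ L
  have dir1 : L' ≤ L := by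
    obtain ⟨p, hp⟩ : ∃ z : ℝ, z = y (Sum.inl v₁) := ⟨_, rfl⟩
    obtain ⟨p', hp'⟩ : ∃ z : ℝ, z = y (Sum.inr 0) := ⟨_, rfl⟩
    obtain ⟨q, hq⟩ : ∃ z : ℝ, z = y (Sum.inl v₂) := ⟨_, rfl⟩
    obtain ⟨q', hq'⟩ : ∃ z : ℝ, z = y (Sum.inr 1) := ⟨_, rfl⟩
    obtain ⟨t, ht⟩ : ∃ z : ℝ, z = (p + p' + q + q') / 2 := ⟨_, rfl⟩
    obtain ⟨xt, hxt⟩ : ∃ xt : Fin m → ℝ,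
        xt = fun w => if w = v₁ then t else if w = v₂ then t else y (Sum.inl w) := ⟨_, rfl⟩
    have hxt1 : xt v₁ = t := by rw [hxt]; simp
    have hxt2 : xt v₂ = t := by rw [hxt]; simp [Ne.symm hne, hne]
    have hagree : ∀ w, w ≠ v₁ → w ≠ v₂ → xt w = y (Sum.inl w) := by
      intro w h1 h2; rw [hxt]; simp only [if_neg h1, if_neg h2]
    have hp0 : 0 ≤ p := hp ▸ hy0 (Sum.inl v₁)
    have hp'0 : 0 ≤ p' := hp' ▸ hy0 (Sum.inr 0)
    have hq0 : 0 ≤ q := hq ▸ hy0 (Sum.inl v₂)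
    have hq'0 : 0 ≤ q' := hq' ▸ hy0 (Sum.inr 1)
    have ht0 : 0 ≤ t := by rw [ht]; linarith
    have hytot : (∑ w, y (Sum.inl w)) + p' + q' = 1 := by
      rw [Fintype.sum_sum_type, Fin.sum_univ_two] at hy1
      rw [hp', hq']
      linarith [hy1]
    have hxtmem : xt ∈ stdSimplex ℝ (Fin m) := by
      constructor
      · intro i
        simp only [hxt]
        split_ifs
        · exact ht0
        · exact ht0
        · exact hy0 (Sum.inl i)
      · have h1 := hsplitsum xt
        have h2 := hsplitsum (fun w => y (Sum.inl w))
        have h3 : ∑ w ∈ (univ.erase v₁).erase v₂, xt w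
            = ∑ w ∈ (univ.erase v₁).erase v₂, y (Sum.inl w) := by
          refine sum_congr rfl fun w hw => ?_
          rw [mem_erase, mem_erase] at hw
          exact hagree w hw.2.1 hw.1
        rw [h1, hxt1, hxt2, h3, ht]
        linarith [hp, hq, hytot, h2]
    have hS12 : S1 G v₁ v₂ (fun i => y (Sum.inl i)) = S2 G v₁ v₂ (fun i => y (Sum.inl i)) :=
      S1_eq_S2 G v₁ v₂ hne hsym _
    have key1 : lagPoly (mixBlowup G v₁ v₂ A B C) y ≤ lagPoly G xt := by
      rw [blowup_decomp G v₁ v₂ hG3 hne A B C hAB hAC hBC hAv hBv hCv y,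
        lagPoly_decomp G v₁ v₂ hG3 hne xt, hxt1, hxt2,
        S0_congr G v₁ v₂ hagree, S1_congr G v₁ v₂ hagree, S2_congr G v₁ v₂ hagree,
        coNbhd_sum_congr G v₁ v₂ hG3 hagree, hsigma, ← hS12, ← hp, ← hp', ← hq, ← hq']
      have sA : (0:ℝ) ≤ ∑ w ∈ A, y (Sum.inl w) := sum_nonneg fun w _ => hy0 _
      have sB : (0:ℝ) ≤ ∑ w ∈ B, y (Sum.inl w) := sum_nonneg fun w _ => hy0 _
      have sC : (0:ℝ) ≤ ∑ w ∈ C, y (Sum.inl w) := sum_nonneg fun w _ => hy0 _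
      have i1 : (p + p') * (q + q') ≤ t * t := by rw [ht]; nlinarith [sq_nonneg (p + p' - q - q')]
      have i2 : (p + q) * (p' + q') ≤ t * t := by rw [ht]; nlinarith [sq_nonneg (p + q - p' - q')]
      have i3 : (p + q') * (p' + q) ≤ t * t := by rw [ht]; nlinarith [sq_nonneg (p + q' - p' - q)]
      have j1 := mul_le_mul_of_nonneg_left i1 sA
      have j2 := mul_le_mul_of_nonneg_left i2 sB
      have j3 := mul_le_mul_of_nonneg_left i3 sC
      have lin : t * S1 G v₁ v₂ (fun i => y (Sum.inl i)) + t * S1 G v₁ v₂ (fun i => y (Sum.inl i))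
          = (p + p') * S1 G v₁ v₂ (fun i => y (Sum.inl i))
            + (q + q') * S1 G v₁ v₂ (fun i => y (Sum.inl i)) := by
        rw [ht]; ring
      linarith [j1, j2, j3, lin]
    calc L' = lagPoly (mixBlowup G v₁ v₂ A B C) y := hyval.symm
      _ ≤ lagPoly G xt := key1
      _ ≤ L := hub ⟨xt, hxtmem, rfl⟩
  -- Direction 2 : L ≤ L'
  have dir2 : L ≤ L' := by
    obtain ⟨t, ht⟩ : ∃ z : ℝ, z = (x v₁ + x v₂) / 2 := ⟨_, rfl⟩
    have ht0 : 0 ≤ t := by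
      have := hx0 v₁; have := hx0 v₂; rw [ht]; linarith
    obtain ⟨yt, hyt⟩ : ∃ yt : Fin m ⊕ Fin 2 → ℝ,
        yt = Sum.elim (fun w => if w = v₁ then t / 2 else if w = v₂ then t / 2 else x w)
          (fun _ => t / 2) := ⟨_, rfl⟩
    have hy1' : yt (Sum.inl v₁) = t / 2 := by rw [hyt]; simp
    have hy2' : yt (Sum.inl v₂) = t / 2 := by rw [hyt]; simp [Ne.symm hne, hne]
    have hy3' : yt (Sum.inr 0) = t / 2 := by rw [hyt]; simp
    have hy4' : yt (Sum.inr 1) = t / 2 := by rw [hyt]; simp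
    have hagree : ∀ w, w ≠ v₁ → w ≠ v₂ → (fun i => yt (Sum.inl i)) w = x w := by
      intro w h1 h2; rw [hyt]; simp only [Sum.elim_inl, if_neg h1, if_neg h2]
    have hytmem : yt ∈ stdSimplex ℝ (Fin m ⊕ Fin 2) := by
      constructor
      · intro i
        rw [hyt]
        rcases i with w | j
        · simp only [Sum.elim_inl]
          split_ifs
          · linarith
          · linarith
          · exact hx0 w
        · simp only [Sum.elim_inr]; linarith
      · rw [Fintype.sum_sum_type, Fin.sum_univ_two]
        have h1 := hsplitsum (fun w => yt (Sum.inl w))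
        have h2 := hsplitsum x
        have h3 : ∑ w ∈ (univ.erase v₁).erase v₂, yt (Sum.inl w)
            = ∑ w ∈ (univ.erase v₁).erase v₂, x w := by
          refine sum_congr rfl fun w hw => ?_
          rw [mem_erase, mem_erase] at hw
          exact hagree w hw.2.1 hw.1
        rw [h1, hy1', hy2', hy3', hy4', h3]
        rw [hx1] at h2
        rw [ht]
        linarith
    have hS12 : S1 G v₁ v₂ x = S2 G v₁ v₂ x := S1_eq_S2 G v₁ v₂ hne hsym x
    have key2 : lagPoly G x ≤ lagPoly (mixBlowup G v₁ v₂ A B C) yt := by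
      rw [blowup_decomp G v₁ v₂ hG3 hne A B C hAB hAC hBC hAv hBv hCv yt,
        lagPoly_decomp G v₁ v₂ hG3 hne x, hy1', hy2', hy3', hy4',
        S0_congr G v₁ v₂ hagree, S1_congr G v₁ v₂ hagree, S2_congr G v₁ v₂ hagree,
        coNbhd_sum_congr G v₁ v₂ hG3 (fun w h1 h2 => (hagree w h1 h2).symm), hsigma, hS12]
      have sA : (0:ℝ) ≤ ∑ w ∈ A, yt (Sum.inl w) := sum_nonneg fun w _ => hytmem.1 _
      have sB : (0:ℝ) ≤ ∑ w ∈ B, yt (Sum.inl w) := sum_nonneg fun w _ => hytmem.1 _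
      have sC : (0:ℝ) ≤ ∑ w ∈ C, yt (Sum.inl w) := sum_nonneg fun w _ => hytmem.1 _
      have hAx : ∑ w ∈ A, x w = ∑ w ∈ A, yt (Sum.inl w) := by
        refine sum_congr rfl fun w hw => ?_
        exact (hagree w (hAv w hw).1 (hAv w hw).2).symm
      have hBx : ∑ w ∈ B, x w = ∑ w ∈ B, yt (Sum.inl w) := by
        refine sum_congr rfl fun w hw => ?_
        exact (hagree w (hBv w hw).1 (hBv w hw).2).symm
      have hCx : ∑ w ∈ C, x w = ∑ w ∈ C, yt (Sum.inl w) := by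
        refine sum_congr rfl fun w hw => ?_
        exact (hagree w (hCv w hw).1 (hCv w hw).2).symm
      have i0 : x v₁ * x v₂ ≤ t * t := by rw [ht]; nlinarith [sq_nonneg (x v₁ - x v₂)]
      have j1 := mul_le_mul_of_nonneg_left i0 sA
      have j2 := mul_le_mul_of_nonneg_left i0 sB
      have j3 := mul_le_mul_of_nonneg_left i0 sC
      have lin : x v₁ * S2 G v₁ v₂ x + x v₂ * S2 G v₁ v₂ x
          = (t / 2 + t / 2) * S2 G v₁ v₂ x + (t / 2 + t / 2) * S2 G v₁ v₂ x := by
        rw [ht]; ring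
      linarith [j1, j2, j3, lin]
    calc L = lagPoly G x := hxval.symm
      _ ≤ lagPoly (mixBlowup G v₁ v₂ A B C) yt := key2
      _ ≤ L' := hub' ⟨yt, hytmem, rfl⟩
  exact le_antisymm dir1 dir2
end

section
/- A mix-crossed blowup G box_{(a,b)} {v_1, v_2} of a 3-graph G is 2-covered if and only if G is 2-covered. -/
open Finset

/-- A hypergraph is 2-covered if every pair of distinct vertices lies in a common edge. -/
def TwoCovered {V : Type*} (H : Finset (Finset V)) : Prop :=
  ∀ u v : V, u ≠ v → ∃ E ∈ H, u ∈ E ∧ v ∈ E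

/-- A mix-crossed blowup of a 3-graph `G` is 2-covered if and only if `G` is 2-covered. -/
theorem mixBlowup_twoCovered {m : ℕ} (a b : ℕ) (ha : 1 ≤ a) (hb : 1 ≤ b)
    (G : Finset (Finset (Fin m))) (hG3 : ∀ E ∈ G, E.card = 3)
    (v₁ v₂ : Fin m) (hne : v₁ ≠ v₂)
    (A B C : Finset (Fin m))
    (hAB : Disjoint A B) (hAC : Disjoint A C) (hBC : Disjoint B C)
    (hunion : A ∪ B ∪ C = coNbhd G v₁ v₂)
    (hA : A.card = a) (hB : B.card = b) (hC : C.Nonempty) :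
    TwoCovered (mixBlowup G v₁ v₂ A B C) ↔ TwoCovered G := by
  have hcoN : ∀ w, w ∈ A ∪ B ∪ C → ({w, v₁, v₂} : Finset (Fin m)) ∈ G := by
    intro w hw; rw [hunion] at hw; simpa [coNbhd] using hw
  have hA1 : A.Nonempty := Finset.card_pos.mp (by omega)
  have hB1 : B.Nonempty := Finset.card_pos.mp (by omega)
  obtain ⟨wa, hwa⟩ := hA1
  obtain ⟨wb, hwb⟩ := hB1
  obtain ⟨wc, hwc⟩ := hC
  have mem1 : ∀ E ∈ G, ¬(v₁ ∈ E ∧ v₂ ∈ E) → E.image Sum.inl ∈ mixBlowup G v₁ v₂ A B C := by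
    intro E hE hcond
    simp only [mixBlowup, mem_union, mem_image, mem_biUnion, mem_filter, mem_insert, mem_singleton]
    exact Or.inl (Or.inl (Or.inl (Or.inl (Or.inl ⟨E, ⟨hE, hcond⟩, rfl⟩))))
  have mem2 : ∀ E ∈ G, v₁ ∈ E → v₂ ∉ E →
      insert (Sum.inr 0) ((E.erase v₁).image Sum.inl) ∈ mixBlowup G v₁ v₂ A B C := by
    intro E hE h1 h2
    simp only [mixBlowup, mem_union, mem_image, mem_biUnion, mem_filter, mem_insert, mem_singleton]
    exact Or.inl (Or.inl (Or.inl (Or.inl (Or.inr ⟨E, ⟨hE, h1, h2⟩, rfl⟩))))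
  have mem3 : ∀ E ∈ G, v₂ ∈ E → v₁ ∉ E →
      insert (Sum.inr 1) ((E.erase v₂).image Sum.inl) ∈ mixBlowup G v₁ v₂ A B C := by
    intro E hE h1 h2
    simp only [mixBlowup, mem_union, mem_image, mem_biUnion, mem_filter, mem_insert, mem_singleton]
    exact Or.inl (Or.inl (Or.inl (Or.inr ⟨E, ⟨hE, h1, h2⟩, rfl⟩)))
  have mem4 : ∀ w ∈ A, ∀ S : Finset (Fin m ⊕ Fin 2),
      (S = {Sum.inl w, Sum.inl v₁, Sum.inl v₂} ∨ S = {Sum.inl w, Sum.inl v₁, Sum.inr 1} ∨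
       S = {Sum.inl w, Sum.inr 0, Sum.inl v₂} ∨ S = {Sum.inl w, Sum.inr 0, Sum.inr 1}) →
      S ∈ mixBlowup G v₁ v₂ A B C := by
    intro w hw S hS
    simp only [mixBlowup, mem_union, mem_image, mem_biUnion, mem_filter, mem_insert, mem_singleton]
    exact Or.inl (Or.inl (Or.inr ⟨w, hw, hS⟩))
  have mem5 : ∀ w ∈ B, ∀ S : Finset (Fin m ⊕ Fin 2),
      (S = {Sum.inl w, Sum.inl v₁, Sum.inr 0} ∨ S = {Sum.inl w, Sum.inl v₁, Sum.inr 1} ∨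
       S = {Sum.inl w, Sum.inl v₂, Sum.inr 0} ∨ S = {Sum.inl w, Sum.inl v₂, Sum.inr 1}) →
      S ∈ mixBlowup G v₁ v₂ A B C := by
    intro w hw S hS
    simp only [mixBlowup, mem_union, mem_image, mem_biUnion, mem_filter, mem_insert, mem_singleton]
    exact Or.inl (Or.inr ⟨w, hw, hS⟩)
  have mem6 : ∀ w ∈ C, ∀ S : Finset (Fin m ⊕ Fin 2),
      (S = {Sum.inl w, Sum.inl v₁, Sum.inr 0} ∨ S = {Sum.inl w, Sum.inl v₁, Sum.inl v₂} ∨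
       S = {Sum.inl w, Sum.inr 0, Sum.inr 1} ∨ S = {Sum.inl w, Sum.inl v₂, Sum.inr 1}) →
      S ∈ mixBlowup G v₁ v₂ A B C := by
    intro w hw S hS
    simp only [mixBlowup, mem_union, mem_image, mem_biUnion, mem_filter, mem_insert, mem_singleton]
    exact Or.inr ⟨w, hw, hS⟩
  have hthird : ∀ E ∈ G, v₁ ∈ E → v₂ ∈ E → ∃ w ∈ A ∪ B ∪ C, E = {w, v₁, v₂} := by
    intro E hE h1 h2
    have hcard := hG3 E hE
    have hsub : ({v₁, v₂} : Finset (Fin m)) ⊆ E := by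
      intro x hx; simp at hx; rcases hx with rfl | rfl <;> assumption
    have h2card : ({v₁, v₂} : Finset (Fin m)).card = 2 := by
      rw [card_insert_of_notMem (by simp [hne]), card_singleton]
    have hd : (E \ {v₁, v₂}).card = 1 := by rw [card_sdiff_of_subset hsub, hcard, h2card]
    obtain ⟨w, hw⟩ := Finset.card_eq_one.mp hd
    have hwmem : w ∈ E \ ({v₁, v₂} : Finset (Fin m)) := by rw [hw]; exact mem_singleton_self w
    simp only [mem_sdiff, mem_insert, mem_singleton, not_or] at hwmem
    obtain ⟨hwE, hw1, hw2⟩ := hwmem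
    have hsub2 : ({w, v₁, v₂} : Finset (Fin m)) ⊆ E := by
      intro x hx; simp at hx; rcases hx with rfl | rfl | rfl <;> assumption
    have hc3 : ({w, v₁, v₂} : Finset (Fin m)).card = 3 := by
      rw [card_insert_of_notMem (by simp [hw1, hw2]),
        card_insert_of_notMem (by simp [hne]), card_singleton]
    have hEeq : E = {w, v₁, v₂} :=
      (Finset.eq_of_subset_of_card_le hsub2 (le_of_eq (by rw [hcard, hc3]))).symm
    refine ⟨w, ?_, hEeq⟩
    rw [hunion]
    simp only [coNbhd, mem_filter, mem_univ, true_and]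
    rw [← hEeq]; exact hE
  constructor
  · intro h u v huv
    obtain ⟨S, hS, huS, hvS⟩ := h (Sum.inl u) (Sum.inl v) (by simpa using huv)
    simp only [mixBlowup, mem_union, mem_image, mem_biUnion, mem_filter, mem_insert,
      mem_singleton] at hS
    rcases hS with (((((⟨E, ⟨hE, -⟩, rfl⟩ | ⟨E, ⟨hE, -, -⟩, rfl⟩) | ⟨E, ⟨hE, -, -⟩, rfl⟩) |
      ⟨w, hw, (rfl | rfl | rfl | rfl)⟩) | ⟨w, hw, (rfl | rfl | rfl | rfl)⟩) |
      ⟨w, hw, (rfl | rfl | rfl | rfl)⟩)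
    all_goals first
      | exact ⟨E, hE, by simpa using huS, by simpa using hvS⟩
      | exact ⟨E, hE, by simp at huS; tauto, by simp at hvS; tauto⟩
      | (refine ⟨{w, v₁, v₂}, hcoN w (by simp [hw]), ?_, ?_⟩ <;> (simp at huS hvS ⊢; tauto))
  · intro h
    have key1 : ∀ u v : Fin m, u ≠ v →
        ∃ S ∈ mixBlowup G v₁ v₂ A B C, Sum.inl u ∈ S ∧ Sum.inl v ∈ S := by
      intro u v huv
      obtain ⟨E, hE, huE, hvE⟩ := h u v huv
      by_cases hcase : v₁ ∈ E ∧ v₂ ∈ E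
      · obtain ⟨w, hwmem, rfl⟩ := hthird E hE hcase.1 hcase.2
        simp only [mem_insert, mem_singleton] at huE hvE
        rcases (by simpa using hwmem : w ∈ A ∨ w ∈ B ∨ w ∈ C) with hwA | hwB | hwC
        · exact ⟨_, mem4 w hwA _ (Or.inl rfl), by simp; tauto, by simp; tauto⟩
        · rcases huE with rfl | rfl | rfl <;> rcases hvE with rfl | rfl | rfl
          all_goals first
            | exact absurd rfl huv
            | (refine ⟨_, mem5 _ hwB _ (Or.inl rfl), ?_, ?_⟩ <;> simp <;> done)
            | (refine ⟨_, mem5 _ hwB _ (Or.inr (Or.inr (Or.inl rfl))), ?_, ?_⟩ <;> simp <;> done)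
            | (refine ⟨_, mem6 _ hwc _ (Or.inr (Or.inl rfl)), ?_, ?_⟩ <;> simp <;> done)
        · exact ⟨_, mem6 w hwC _ (Or.inr (Or.inl rfl)), by simp; tauto, by simp; tauto⟩
      · exact ⟨E.image Sum.inl, mem1 E hE hcase, mem_image_of_mem _ huE, mem_image_of_mem _ hvE⟩
    have key2 : ∀ (u : Fin m) (j : Fin 2),
        ∃ S ∈ mixBlowup G v₁ v₂ A B C, Sum.inl u ∈ S ∧ Sum.inr j ∈ S := by
      intro u j
      fin_cases j
      · -- j = 0
        by_cases h1 : u = v₁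
        · subst h1; exact ⟨_, mem6 wc hwc _ (Or.inl rfl), by simp, by simp⟩
        by_cases h2 : u = v₂
        · subst h2; exact ⟨_, mem4 wa hwa _ (Or.inr (Or.inr (Or.inl rfl))), by simp, by simp⟩
        by_cases hu : u ∈ A ∪ B ∪ C
        · rcases (by simpa using hu : u ∈ A ∨ u ∈ B ∨ u ∈ C) with hx | hx | hx
          · exact ⟨_, mem4 u hx _ (Or.inr (Or.inr (Or.inl rfl))), by simp, by simp⟩
          · exact ⟨_, mem5 u hx _ (Or.inl rfl), by simp, by simp⟩
          · exact ⟨_, mem6 u hx _ (Or.inl rfl), by simp, by simp⟩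
        · obtain ⟨E, hE, huE, hv1E⟩ := h u v₁ h1
          have hv2 : v₂ ∉ E := by
            intro hv2
            obtain ⟨w, hwmem, hEeq⟩ := hthird E hE hv1E hv2
            rw [hEeq] at huE
            simp only [mem_insert, mem_singleton] at huE
            rcases huE with rfl | rfl | rfl
            · exact hu hwmem
            · exact h1 rfl
            · exact h2 rfl
          exact ⟨_, mem2 E hE hv1E hv2, by simp [h1, huE], by simp⟩
      · -- j = 1
        by_cases h1 : u = v₁
        · subst h1; exact ⟨_, mem4 wa hwa _ (Or.inr (Or.inl rfl)), by simp, by simp⟩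
        by_cases h2 : u = v₂
        · subst h2
          exact ⟨_, mem6 wc hwc _ (Or.inr (Or.inr (Or.inr rfl))), by simp, by simp⟩
        by_cases hu : u ∈ A ∪ B ∪ C
        · rcases (by simpa using hu : u ∈ A ∨ u ∈ B ∨ u ∈ C) with hx | hx | hx
          · exact ⟨_, mem4 u hx _ (Or.inr (Or.inl rfl)), by simp, by simp⟩
          · exact ⟨_, mem5 u hx _ (Or.inr (Or.inl rfl)), by simp, by simp⟩
          · exact ⟨_, mem6 u hx _ (Or.inr (Or.inr (Or.inr rfl))), by simp, by simp⟩
        · obtain ⟨E, hE, huE, hv2E⟩ := h u v₂ h2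
          have hv1 : v₁ ∉ E := by
            intro hv1
            obtain ⟨w, hwmem, hEeq⟩ := hthird E hE hv1 hv2E
            rw [hEeq] at huE
            simp only [mem_insert, mem_singleton] at huE
            rcases huE with rfl | rfl | rfl
            · exact hu hwmem
            · exact h1 rfl
            · exact h2 rfl
          exact ⟨_, mem3 E hE hv2E hv1, by simp [h2, huE], by simp⟩
    intro x y hxy
    obtain u | i := x <;> obtain v | j := y
    · exact key1 u v (by simpa using hxy)
    · exact key2 u j
    · obtain ⟨S, hS, h1, h2⟩ := key2 v i; exact ⟨S, hS, h2, h1⟩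
    · have hij : i ≠ j := by simpa using hxy
      refine ⟨{Sum.inl wa, Sum.inr 0, Sum.inr 1},
        mem4 wa hwa _ (Or.inr (Or.inr (Or.inr rfl))), ?_, ?_⟩ <;>
        fin_cases i <;> fin_cases j <;>
        first
          | exact absurd rfl hij
          | exact mem_insert_of_mem (mem_insert_self _ _)
          | exact mem_insert_of_mem (mem_insert_of_mem (mem_singleton_self _))
end
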